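/- arXiv:2302.09849 — 2 statements merged into one kernel-verified Lean document; each statement's English description precedes it below -/
import Mathlib

section
/- Suppose that F is an r-graph and P is a minimal pattern such that (F,P) is a Turán pair. Then ex(n,F) is 4·C(n−1,r−2)-smooth, i.e. |δ(n,F) − d(n−1,F)| ≤ 4·C(n−1,r−2) for all n, where δ(n,F) = ex(n,F) − ex(n−1,F) and d(n,F) = r·ex(n,F)/n. -/
open Filter

namespace DensityCH

/-- An `r`-uniform hypergraph with vertices in `ℕ`:
a finite vertex set together with a set of `r`-element edges. -/
structure HGraph (r : ℕ) where
  verts : Finset ℕ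
  edges : Finset (Finset ℕ)
  edges_sub : ∀ e ∈ edges, e ⊆ verts
  edges_card : ∀ e ∈ edges, e.card = r

namespace HGraph

/-- Build an `r`-graph from a vertex set and a set of candidate edges,
keeping exactly the well-formed candidates. -/
def ofEdges (r : ℕ) (V : Finset ℕ) (E : Finset (Finset ℕ)) : HGraph r where
  verts := V
  edges := E.filter fun e => e ⊆ V ∧ e.card = r
  edges_sub := fun e he => ((Finset.mem_filter.mp he).2).1
  edges_card := fun e he => ((Finset.mem_filter.mp he).2).2

variable {r : ℕ}

/-- `H` contains a copy of `F`, i.e. a subgraph isomorphic to `F`. -/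
def IsCopyIn (F H : HGraph r) : Prop :=
  ∃ f : ℕ → ℕ, Set.InjOn f ↑F.verts ∧ (∀ v ∈ F.verts, f v ∈ H.verts) ∧
    ∀ e ∈ F.edges, e.image f ∈ H.edges

/-- The subgraph of `H` induced on `S`. -/
def induce (H : HGraph r) (S : Finset ℕ) : HGraph r :=
  ofEdges r (H.verts ∩ S) (H.edges.filter fun e => e ⊆ S)

/-- Delete a vertex from `H`. -/
def deleteVert (H : HGraph r) (v : ℕ) : HGraph r :=
  ofEdges r (H.verts.erase v) (H.edges.filter fun e => v ∉ e)

/-- The degree of a vertex. -/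
def deg (H : HGraph r) (v : ℕ) : ℕ := (H.edges.filter fun e => v ∈ e).card

/-- The maximum degree `Δ(H)`. -/
def maxDeg (H : HGraph r) : ℕ := H.verts.sup H.deg

/-- The minimum degree `δ(H)`. -/
def minDeg (H : HGraph r) : ℕ :=
  if h : H.verts.Nonempty then H.verts.inf' h H.deg else 0

/-- The average degree `d(H) = r·|E(H)|/|V(H)|`. -/
noncomputable def avgDeg (H : HGraph r) : ℝ :=
  (r : ℝ) * (H.edges.card : ℝ) / (H.verts.card : ℝ)

/-- `H` contains `k` pairwise vertex-disjoint copies of `F`, i.e. `ν(F,H) ≥ k`. -/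
def HasMatching (F H : HGraph r) (k : ℕ) : Prop :=
  ∃ S : Fin k → Finset ℕ,
    (∀ i, S i ⊆ H.verts ∧ (S i).card = F.verts.card) ∧
    (∀ i j, i ≠ j → Disjoint (S i) (S j)) ∧
    ∀ i, F.IsCopyIn (H.induce (S i))

/-- Isomorphism of hypergraphs. -/
def Iso (G H : HGraph r) : Prop :=
  ∃ f : ℕ → ℕ, Set.BijOn f ↑G.verts ↑H.verts ∧
    ∀ e ∈ Finset.powersetCard r G.verts, (e ∈ G.edges ↔ e.image f ∈ H.edges)

/-- The join `G ⋈ H`: all edges of `G`, all edges of `H`, and all `r`-sets meeting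
both vertex sets. -/
def join (G H : HGraph r) : HGraph r :=
  ofEdges r (G.verts ∪ H.verts)
    (G.edges ∪ H.edges ∪ ((Finset.powersetCard r (G.verts ∪ H.verts)).filter
      fun e => (e ∩ G.verts).Nonempty ∧ (e ∩ H.verts).Nonempty))

end HGraph

/-- The complete `r`-graph on a vertex set `S`. -/
def completeOn (r : ℕ) (S : Finset ℕ) : HGraph r :=
  HGraph.ofEdges r S (Finset.powersetCard r S)

/-- The `r`-graph on `V` with no edges. -/
def emptyOn (r : ℕ) (V : Finset ℕ) : HGraph r := HGraph.ofEdges r V ∅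

/-- The Turán number `ex(n,F)`. -/
noncomputable def exN (r n : ℕ) (F : HGraph r) : ℕ :=
  sSup {m | ∃ H : HGraph r, H.verts.card = n ∧ ¬ F.IsCopyIn H ∧ H.edges.card = m}

/-- `d(n,F) = r·ex(n,F)/n`. -/
noncomputable def dN (r n : ℕ) (F : HGraph r) : ℝ := (r : ℝ) * (exN r n F : ℝ) / (n : ℝ)

/-- `δ(n,F) = ex(n,F) − ex(n−1,F)` (as a real number). -/
noncomputable def deltaN (r n : ℕ) (F : HGraph r) : ℝ := (exN r n F : ℝ) - (exN r (n-1) F : ℝ)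

/-- `x` is the Turán density `π(F)`, i.e. the limit of `ex(n,F)/C(n,r)`. -/
def HasTuranDensity (r : ℕ) (F : HGraph r) (x : ℝ) : Prop :=
  Tendsto (fun n : ℕ => (exN r n F : ℝ) / (n.choose r : ℝ)) atTop (nhds x)

/-- `ex(n,(t+1)F)`: the maximum number of edges of an `n`-vertex `r`-graph with no
`t+1` pairwise vertex-disjoint copies of `F`. -/
noncomputable def exMatchN (r n t : ℕ) (F : HGraph r) : ℕ :=
  sSup {m | ∃ H : HGraph r, H.verts.card = n ∧ ¬ F.HasMatching H (t+1) ∧ H.edges.card = m}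

/-- `H ∈ EX(n,F)`. -/
def IsExtremalFree (r n : ℕ) (F H : HGraph r) : Prop :=
  H.verts.card = n ∧ ¬ F.IsCopyIn H ∧ H.edges.card = exN r n F

/-- `H ∈ EX(n,(t+1)F)`. -/
def IsExtremalMatchingFree (r n t : ℕ) (F H : HGraph r) : Prop :=
  H.verts.card = n ∧ ¬ F.HasMatching H (t+1) ∧ H.edges.card = exMatchN r n t F

/-- `F` is `(f1, f2)`-bounded at `n`. -/
def BoundedAt (r n : ℕ) (F : HGraph r) (f1 f2 : ℝ) : Prop :=
  ∀ H : HGraph r, H.verts.card = n → ¬ F.IsCopyIn H →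
    dN r n F - f1 ≤ H.avgDeg → (H.maxDeg : ℝ) ≤ dN r n F + f2

/-- `ex(·,F)` is `g`-smooth at `n`: `|δ(n,F) − d(n−1,F)| ≤ g(n)`. -/
def SmoothAt (r n : ℕ) (F : HGraph r) (g : ℝ) : Prop :=
  |deltaN r n F - dN r (n-1) F| ≤ g

/-- The collection `H 0, …, H t` (on a common vertex set) has a rainbow `F`-matching. -/
def HasRainbowMatching (r t : ℕ) (F : HGraph r) (H : Fin (t+1) → HGraph r) : Prop :=
  ∃ S : Fin (t+1) → Finset ℕ,
    (∀ i, S i ⊆ (H i).verts ∧ (S i).card = F.verts.card) ∧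
    (∀ i j, i ≠ j → Disjoint (S i) (S j)) ∧
    ∀ i, F.IsCopyIn ((H i).induce (S i))

/-!  Patterns -/

/-- An `r`-uniform pattern: a finite index set together with a collection of
`r`-multisets on it. -/
structure Pattern (r : ℕ) where
  idx : Finset ℕ
  mE : Finset (Multiset ℕ)
  card_eq : ∀ s ∈ mE, Multiset.card s = r
  mem_idx : ∀ s ∈ mE, ∀ i ∈ s, i ∈ idx

namespace Pattern

variable {r : ℕ}

/-- The pattern `P − i`. -/
def erase (P : Pattern r) (i : ℕ) : Pattern r where
  idx := P.idx.erase i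
  mE := P.mE.filter fun s => i ∉ s
  card_eq := fun s hs => P.card_eq s (Finset.mem_filter.mp hs).1
  mem_idx := by
    intro s hs j hj
    have h1 := Finset.mem_filter.mp hs
    refine Finset.mem_erase.mpr ⟨?_, P.mem_idx s h1.1 j hj⟩
    rintro rfl
    exact h1.2 hj

/-- `H` is a `P`-construction: a blowup of the pattern `P`. -/
def IsConstruction (P : Pattern r) (H : HGraph r) : Prop :=
  ∃ part : ℕ → ℕ, (∀ v ∈ H.verts, part v ∈ P.idx) ∧
    ∀ e : Finset ℕ, e ∈ H.edges ↔ (e ⊆ H.verts ∧ e.card = r ∧ Multiset.map part e.val ∈ P.mE)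

/-- `H` is a `P`-subconstruction: a subgraph of a `P`-construction. -/
def IsSubconstruction (P : Pattern r) (H : HGraph r) : Prop :=
  ∃ G : HGraph r, P.IsConstruction G ∧ H.verts ⊆ G.verts ∧ H.edges ⊆ G.edges

end Pattern

/-- `Λ(P,n)`: the maximum number of edges of an `n`-vertex `P`-construction. -/
noncomputable def patEx (r : ℕ) (P : Pattern r) (n : ℕ) : ℕ :=
  sSup {m | ∃ H : HGraph r, P.IsConstruction H ∧ H.verts.card = n ∧ H.edges.card = m}

/-- The Lagrangian `λ(P) = lim Λ(P,n)/C(n,r)`. -/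
noncomputable def patLagrangian (r : ℕ) (P : Pattern r) : ℝ :=
  limUnder atTop fun n : ℕ => (patEx r P n : ℝ) / (n.choose r : ℝ)

/-- The pattern `P` is minimal: `λ(P−i) < λ(P)` for all `i`. -/
def Pattern.Minimal {r : ℕ} (P : Pattern r) : Prop :=
  ∀ i ∈ P.idx, patLagrangian r (P.erase i) < patLagrangian r P

/-- `(F,P)` is a Turán pair. -/
def IsTuranPair (r : ℕ) (F : HGraph r) (P : Pattern r) : Prop :=
  (∀ H : HGraph r, P.IsConstruction H → ¬ F.IsCopyIn H) ∧
  (∀ H : HGraph r, ¬ F.IsCopyIn H → H.edges.card = exN r H.verts.card F →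
    P.IsConstruction H)

/-- `F` is edge-stable with respect to `P` (with Turán density `π`). -/
def EdgeStable (r : ℕ) (F : HGraph r) (P : Pattern r) (π : ℝ) : Prop :=
  ∀ δ : ℝ, 0 < δ → ∃ N₀ : ℕ, ∃ ζ : ℝ, 0 < ζ ∧
    ∀ H : HGraph r, N₀ ≤ H.verts.card → ¬ F.IsCopyIn H →
      (π - ζ) * (H.verts.card.choose r : ℝ) ≤ (H.edges.card : ℝ) →
      ∃ H' : HGraph r, H'.verts ⊆ H.verts ∧ H'.edges ⊆ H.edges ∧
        (π - δ) * (H.verts.card.choose r : ℝ) ≤ (H'.edges.card : ℝ) ∧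
        P.IsSubconstruction H'

/-- `F` is weakly vertex-extendable with respect to `P` (with Turán density `π`). -/
def WeaklyVertexExtendable (r : ℕ) (F : HGraph r) (P : Pattern r) (π : ℝ) : Prop :=
  ∀ δ : ℝ, 0 < δ → ∃ N₀ : ℕ, ∃ ζ : ℝ, 0 < ζ ∧
    ∀ H : HGraph r, N₀ ≤ H.verts.card → ¬ F.IsCopyIn H →
      (π - ζ) * (((H.verts.card - 1).choose (r-1) : ℕ) : ℝ) ≤ (H.minDeg : ℝ) →
      ∀ v ∈ H.verts, P.IsSubconstruction (H.deleteVert v) →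
        (H.deg v : ℝ) ≤ (π + δ) * (((H.verts.card - 1).choose (r-1) : ℕ) : ℝ)

/-- `F` is degree-stable with respect to `P` (with Turán density `π`). -/
def DegreeStable (r : ℕ) (F : HGraph r) (P : Pattern r) (π : ℝ) : Prop :=
  ∃ ζ : ℝ, 0 < ζ ∧ ∃ N₀ : ℕ,
    ∀ H : HGraph r, N₀ ≤ H.verts.card → ¬ F.IsCopyIn H →
      (π - ζ) * (((H.verts.card - 1).choose (r-1) : ℕ) : ℝ) ≤ (H.minDeg : ℝ) →
      P.IsSubconstruction H

/-!  Concrete constructions -/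

/-- The generalized Turán graph `T_r(·,ℓ)` on vertex set `V` (parts are residue
classes mod `ℓ`; on an interval these are balanced). -/
def turanOn (r ℓ : ℕ) (V : Finset ℕ) : HGraph r :=
  HGraph.ofEdges r V ((Finset.powersetCard r V).filter
    fun e => ∀ u ∈ e, ∀ v ∈ e, u % ℓ = v % ℓ → u = v)

/-- The `r`-graph on `V₁ ∪ V₂` whose edges are all `r`-sets meeting both parts. -/
def crossOn (r : ℕ) (V₁ V₂ : Finset ℕ) : HGraph r :=
  HGraph.ofEdges r (V₁ ∪ V₂) ((Finset.powersetCard r (V₁ ∪ V₂)).filter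
    fun e => (e ∩ V₁).Nonempty ∧ (e ∩ V₂).Nonempty)

/-- The `r`-graph on `V₁ ∪ V₂` whose edges are all `r`-sets meeting `V₁` in an odd
number of vertices. -/
def oddCross (r : ℕ) (V₁ V₂ : Finset ℕ) : HGraph r :=
  HGraph.ofEdges r (V₁ ∪ V₂) ((Finset.powersetCard r (V₁ ∪ V₂)).filter
    fun e => Odd (e ∩ V₁).card)

/-- The Fano plane. -/
def fano : HGraph 3 :=
  HGraph.ofEdges 3 (Finset.Icc 1 7)
    {({1,2,3} : Finset ℕ), {3,4,5}, {5,6,1}, {1,7,4}, {2,7,5}, {3,7,6}, {2,4,6}}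

/-- The generalized triangle `𝕋_r`, with edges `{1,…,r}`, `{1,…,r−1,r+1}` and
`{r,…,2r−1}`. -/
def genTri (r : ℕ) : HGraph r :=
  HGraph.ofEdges r (Finset.Icc 1 (2*r - 1))
    {Finset.Icc 1 r, Finset.Icc 1 (r-1) ∪ {r+1}, Finset.Icc r (2*r - 1)}

/-- `G` is a blowup of the `r`-graph `W` (viewing `W` as a pattern). -/
def IsBlowupOf {r : ℕ} (W G : HGraph r) : Prop :=
  ∃ part : ℕ → ℕ, (∀ v ∈ G.verts, part v ∈ W.verts) ∧
    ∀ e : Finset ℕ, e ∈ G.edges ↔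
      (e ⊆ G.verts ∧ e.card = r ∧ ∃ f ∈ W.edges, Multiset.map part e.val = f.val)

/-- The expansion `H^F` of an `r`-graph `F`: for every pair of vertices not covered
by an edge of `F`, add an edge consisting of this pair plus `r−2` new vertices,
these sets of new vertices being pairwise disjoint. -/
def HGraph.expansion {r : ℕ} (F : HGraph r) : HGraph r :=
  HGraph.ofEdges r
    (F.verts ∪ (((F.verts ×ˢ F.verts).filter fun p =>
        p.1 < p.2 ∧ ∀ e ∈ F.edges, ¬ (p.1 ∈ e ∧ p.2 ∈ e)).biUnion fun p =>
      (Finset.range (r-2)).image fun s =>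
        (F.verts.sup id + 1) + (p.1 * (F.verts.sup id + 1) + p.2) * r + s))
    (F.edges ∪ (((F.verts ×ˢ F.verts).filter fun p =>
        p.1 < p.2 ∧ ∀ e ∈ F.edges, ¬ (p.1 ∈ e ∧ p.2 ∈ e)).image fun p =>
      insert p.1 (insert p.2 ((Finset.range (r-2)).image fun s =>
        (F.verts.sup id + 1) + (p.1 * (F.verts.sup id + 1) + p.2) * r + s))))

/-- A `2`-graph is a tree on `k` vertices: `k` vertices, `k−1` edges, connected. -/
def IsTreeGraph (k : ℕ) (T : HGraph 2) : Prop :=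
  T.verts.card = k ∧ T.edges.card = k - 1 ∧
  ∀ S : Finset ℕ, S ⊆ T.verts → S.Nonempty → S ≠ T.verts →
    ∃ e ∈ T.edges, (e ∩ S).Nonempty ∧ (e \ S).Nonempty

/-- `T` satisfies the Erdős–Sós property for `k`: every graph with average degree
greater than `k−2` contains `T`. -/
def ErdosSos (k : ℕ) (T : HGraph 2) : Prop :=
  ∀ G : HGraph 2, ((k : ℝ) - 2) * (G.verts.card : ℝ) < 2 * (G.edges.card : ℝ) →
    T.IsCopyIn G

/-- The `(r−2)`-expansion `Exp(T)` of a `2`-graph `T`: enlarge every edge by one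
common fixed set of `r−2` new vertices. -/
def expTree (r : ℕ) (T : HGraph 2) : HGraph r :=
  HGraph.ofEdges r
    (T.verts ∪ ((Finset.range (r-2)).image fun s => T.verts.sup id + 1 + s))
    (T.edges.image fun e =>
      e ∪ ((Finset.range (r-2)).image fun s => T.verts.sup id + 1 + s))

/-- The chromatic number of a `2`-graph. -/
noncomputable def chrom (F : HGraph 2) : ℕ :=
  sInf {k | ∃ c : ℕ → ℕ, (∀ v ∈ F.verts, c v < k) ∧
    ∀ e ∈ F.edges, ∀ u ∈ e, ∀ v ∈ e, u ≠ v → c u ≠ c v}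

/-- A graph is edge-critical if deleting some edge lowers its chromatic number. -/
def EdgeCritical (F : HGraph 2) : Prop :=
  ∃ e ∈ F.edges, chrom (HGraph.ofEdges 2 F.verts (F.edges.erase e)) < chrom F

/-- `H` is semibipartite: the vertex set splits into `V₁ ∪ V₂` so that every edge
has exactly one vertex in `V₁`. -/
def Semibipartite (r : ℕ) (H : HGraph r) : Prop :=
  ∃ V₁ ⊆ H.verts, ∀ e ∈ H.edges, (e ∩ V₁).card = 1

/-- `H` is a `K_ℓ^r`-subconstruction, i.e. an `ℓ`-partite `r`-graph. -/
def IsKlSub (r ℓ : ℕ) (H : HGraph r) : Prop :=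
  ∃ f : ℕ → ℕ, (∀ v ∈ H.verts, f v < ℓ) ∧
    ∀ e ∈ H.edges, ∀ u ∈ e, ∀ v ∈ e, f u = f v → u = v

/-- The Lagrangian `λ(W)` of an `r`-graph `W`, viewing `W` as a pattern. -/
noncomputable def hgLagrangian (r : ℕ) (W : HGraph r) : ℝ :=
  limUnder atTop fun n : ℕ =>
    ((sSup {m | ∃ G : HGraph r, IsBlowupOf W G ∧ G.verts.card = n ∧ G.edges.card = m} : ℕ) : ℝ)
      / (n.choose r : ℝ)

/-- The `r`-graph `B(r,ℓ+1)`. -/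
def BGraph (r ℓ : ℕ) : HGraph r :=
  HGraph.ofEdges r (Finset.Icc 1 (ℓ+1))
    (insert (Finset.Icc 1 r)
      ((Finset.powersetCard r (Finset.Icc 2 (ℓ+1))).filter
        fun e => (e ∩ Finset.Icc 2 r).card ≤ 1))

/-- The `r`-uniform matching of size two, `M_2^r`. -/
def matching2 (r : ℕ) : HGraph r :=
  HGraph.ofEdges r (Finset.Icc 1 (2*r)) {Finset.Icc 1 r, Finset.Icc (r+1) (2*r)}

/-- The expanded triangle `𝓒_3^{2r}`. -/
def expandedTriangle (r : ℕ) : HGraph (2*r) :=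
  HGraph.ofEdges (2*r) (Finset.Icc 1 (3*r))
    {Finset.Icc 1 (2*r), Finset.Icc (r+1) (3*r), Finset.Icc 1 r ∪ Finset.Icc (2*r+1) (3*r)}

/-- The `4`-graph `𝔽_{4,3}`. -/
def F43 : HGraph 4 :=
  HGraph.ofEdges 4 (Finset.Icc 1 7)
    {({1,2,3,4} : Finset ℕ), {1,2,3,5}, {1,2,3,6}, {1,2,3,7}, {4,5,6,7}}

/-- The `3`-graph `𝔽_{3,2}`. -/
def F32 : HGraph 3 :=
  HGraph.ofEdges 3 (Finset.Icc 1 5)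
    {({1,2,3} : Finset ℕ), {1,2,4}, {1,2,5}, {3,4,5}}

/-- `H` contains pairwise vertex-disjoint copies of `F i`, `ts i` many of each. -/
def HasMixedMatching (r k : ℕ) (F : Fin k → HGraph r) (ts : Fin k → ℕ)
    (H : HGraph r) : Prop :=
  ∃ S : (i : Fin k) → Fin (ts i) → Finset ℕ,
    (∀ i j, S i j ⊆ H.verts ∧ (S i j).card = (F i).verts.card) ∧
    (∀ p q : Σ i : Fin k, Fin (ts i), p ≠ q → Disjoint (S p.1 p.2) (S q.1 q.2)) ∧
    ∀ i j, (F i).IsCopyIn (H.induce (S i j))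

/-- `ex(n, ⊔ᵢ tᵢ Fᵢ)`. -/
noncomputable def exMixedN (r k : ℕ) (F : Fin k → HGraph r) (ts : Fin k → ℕ)
    (n : ℕ) : ℕ :=
  sSup {m | ∃ H : HGraph r, H.verts.card = n ∧ ¬ HasMixedMatching r k F ts H ∧
    H.edges.card = m}

/-- `ex(n, {F₁,…,F_k})`. -/
noncomputable def exFamN (r k : ℕ) (F : Fin k → HGraph r) (n : ℕ) : ℕ :=
  sSup {m | ∃ H : HGraph r, H.verts.card = n ∧ (∀ i, ¬ (F i).IsCopyIn H) ∧
    H.edges.card = m}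


namespace Aux

open Finset

variable {r : ℕ}

lemma edges_card_le (H : HGraph r) : H.edges.card ≤ H.verts.card.choose r := by
  rw [← Finset.card_powersetCard]
  apply Finset.card_le_card
  intro e he
  exact Finset.mem_powersetCard.mpr ⟨H.edges_sub e he, H.edges_card e he⟩

lemma bddAboveS (n : ℕ) (F : HGraph r) :
    BddAbove {m | ∃ H : HGraph r, H.verts.card = n ∧ ¬ F.IsCopyIn H ∧ H.edges.card = m} := by
  refine ⟨n.choose r, ?_⟩
  rintro m ⟨H, hc, -, he⟩
  rw [← he, ← hc]
  exact edges_card_le H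

lemma le_exN {n : ℕ} {F H : HGraph r} (hc : H.verts.card = n) (hf : ¬ F.IsCopyIn H) :
    H.edges.card ≤ exN r n F :=
  le_csSup (bddAboveS n F) ⟨H, hc, hf, rfl⟩

lemma exN_le {n M : ℕ} {F : HGraph r}
    (h : ∀ H : HGraph r, H.verts.card = n → ¬ F.IsCopyIn H → H.edges.card ≤ M) :
    exN r n F ≤ M := by
  unfold exN
  by_cases hS : {m | ∃ H : HGraph r, H.verts.card = n ∧ ¬ F.IsCopyIn H ∧ H.edges.card = m}.Nonempty
  · refine csSup_le hS ?_
    rintro m ⟨H, hc, hf, he⟩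
    exact he ▸ h H hc hf
  · rw [Set.not_nonempty_iff_eq_empty.mp hS, csSup_empty]
    exact Nat.zero_le M

lemma exists_extremal {n : ℕ} {F : HGraph r}
    (hne : ∃ H : HGraph r, H.verts.card = n ∧ ¬ F.IsCopyIn H) :
    ∃ H : HGraph r, H.verts.card = n ∧ ¬ F.IsCopyIn H ∧ H.edges.card = exN r n F := by
  obtain ⟨H0, h0c, h0f⟩ := hne
  have hmem := Nat.sSup_mem (s := {m | ∃ H : HGraph r, H.verts.card = n ∧ ¬ F.IsCopyIn H ∧ H.edges.card = m}) ⟨H0.edges.card, H0, h0c, h0f, rfl⟩ (bddAboveS n F)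
  obtain ⟨H, hc, hf, he⟩ := hmem
  exact ⟨H, hc, hf, he⟩

lemma copy_mono {F H H' : HGraph r} (hv : H'.verts ⊆ H.verts) (he : H'.edges ⊆ H.edges)
    (h : F.IsCopyIn H') : F.IsCopyIn H := by
  obtain ⟨f, hinj, hmaps, hedges⟩ := h
  exact ⟨f, hinj, fun v hvv => hv (hmaps v hvv), fun e hee => he (hedges e hee)⟩

lemma exists_injOn (A B : Finset ℕ) (h : A.card ≤ B.card) :
    ∃ f : ℕ → ℕ, Set.InjOn f ↑A ∧ ∀ v ∈ A, f v ∈ B := by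
  classical
  refine ⟨fun x => if hx : x ∈ A then B.orderEmbOfCardLe h ((A.orderIsoOfFin rfl).symm ⟨x, hx⟩) else 0, ?_, ?_⟩
  · intro x hx y hy hxy
    have hx' : x ∈ A := hx
    have hy' : y ∈ A := hy
    dsimp only at hxy
    rw [dif_pos hx', dif_pos hy'] at hxy
    have h1 := (B.orderEmbOfCardLe h).injective hxy
    have h2 := (A.orderIsoOfFin rfl).symm.injective h1
    exact congrArg Subtype.val h2
  · intro v hv
    dsimp only
    rw [dif_pos hv]
    exact B.orderEmbOfCardLe_mem h _

lemma copy_of_no_edges {F H : HGraph r} (hE : F.edges = ∅)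
    (hcard : F.verts.card ≤ H.verts.card) : F.IsCopyIn H := by
  obtain ⟨f, hinj, hmaps⟩ := exists_injOn F.verts H.verts hcard
  exact ⟨f, hinj, hmaps, by simp [hE]⟩

lemma copy_card_le {F H : HGraph r} (h : F.IsCopyIn H) : F.verts.card ≤ H.verts.card := by
  obtain ⟨f, hinj, hmaps, -⟩ := h
  exact Finset.card_le_card_of_injOn f hmaps hinj

lemma sum_deg (H : HGraph r) : ∑ v ∈ H.verts, H.deg v = r * H.edges.card := by
  unfold HGraph.deg
  calc ∑ v ∈ H.verts, (H.edges.filter fun e => v ∈ e).card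
      = ∑ v ∈ H.verts, ∑ e ∈ H.edges, if v ∈ e then 1 else 0 := by
        exact Finset.sum_congr rfl fun v _ => Finset.card_filter _ _
    _ = ∑ e ∈ H.edges, ∑ v ∈ H.verts, if v ∈ e then 1 else 0 := Finset.sum_comm
    _ = ∑ e ∈ H.edges, r := by
        refine Finset.sum_congr rfl fun e he => ?_
        rw [← Finset.card_filter]
        rw [Finset.filter_mem_eq_inter, Finset.inter_eq_right.mpr (H.edges_sub e he)]
        exact H.edges_card e he
    _ = r * H.edges.card := by rw [Finset.sum_const, smul_eq_mul, mul_comm]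

lemma deleteVert_edges (H : HGraph r) (v : ℕ) :
    (H.deleteVert v).edges = H.edges.filter fun e => v ∉ e := by
  unfold HGraph.deleteVert HGraph.ofEdges
  ext e
  simp only [Finset.mem_filter]
  constructor
  · tauto
  · rintro ⟨he, hv⟩
    exact ⟨⟨he, hv⟩, Finset.subset_erase.mpr ⟨H.edges_sub e he, hv⟩, H.edges_card e he⟩

end Aux
namespace Aux

/-- The full blowup of pattern `P` on vertex set `V` with part function `part`. -/
def blowup (r : ℕ) (P : Pattern r) (V : Finset ℕ) (part : ℕ → ℕ) : HGraph r :=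
  HGraph.ofEdges r V ((Finset.powersetCard r V).filter
    fun e => Multiset.map part e.val ∈ P.mE)

lemma blowup_verts (r : ℕ) (P : Pattern r) (V : Finset ℕ) (part : ℕ → ℕ) :
    (blowup r P V part).verts = V := rfl

lemma mem_blowup_edges {r : ℕ} {P : Pattern r} {V : Finset ℕ} {part : ℕ → ℕ} {e : Finset ℕ} :
    e ∈ (blowup r P V part).edges ↔
      e ⊆ V ∧ e.card = r ∧ Multiset.map part e.val ∈ P.mE := by
  unfold blowup HGraph.ofEdges
  simp only [Finset.mem_filter, Finset.mem_powersetCard]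
  tauto

lemma blowup_isConstruction {r : ℕ} {P : Pattern r} {V : Finset ℕ} {part : ℕ → ℕ}
    (hpart : ∀ v ∈ V, part v ∈ P.idx) : P.IsConstruction (blowup r P V part) := by
  refine ⟨part, hpart, fun e => ?_⟩
  rw [mem_blowup_edges]
  exact Iff.rfl

lemma choose_ineq {r n : ℕ} (hr : 1 ≤ r) (hn : r + 1 ≤ n) :
    r * (r - 1) * Nat.choose (n - 1) r ≤ (n - r) * (n - 1) * Nat.choose (n - 1) (r - 2) := by
  rcases Nat.lt_or_ge r 2 with h2 | h2
  · have : r = 1 := by omega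
    subst this
    simp
  · obtain ⟨s, rfl⟩ : ∃ s, r = s + 2 := ⟨r - 2, by omega⟩
    have h1 := Nat.choose_succ_right_eq (n - 1) (s + 1)
    have h2' := Nat.choose_succ_right_eq (n - 1) s
    have e1 : n - 1 - (s + 1) = n - (s + 2) := by omega
    have e2 : n - 1 - s = n - (s + 2) + 1 := by omega
    rw [e1] at h1
    rw [e2] at h2'
    have hred : (s + 2) - 2 = s := by omega
    rw [hred]
    have hm1 : (s + 2) - 1 = s + 1 := rfl
    rw [hm1]
    calc (s + 2) * (s + 1) * Nat.choose (n - 1) (s + 2)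
        = (s + 1) * (Nat.choose (n - 1) (s + 2) * (s + 2)) := by ring
      _ = (s + 1) * (Nat.choose (n - 1) (s + 1) * (n - (s + 2))) := by rw [h1]
      _ = (n - (s + 2)) * (Nat.choose (n - 1) (s + 1) * (s + 1)) := by ring
      _ = (n - (s + 2)) * (Nat.choose (n - 1) s * (n - (s + 2) + 1)) := by rw [h2']
      _ ≤ (n - (s + 2)) * (Nat.choose (n - 1) s * (n - 1)) := by
          refine Nat.mul_le_mul_left _ (Nat.mul_le_mul_left _ (by omega))
      _ = (n - (s + 2)) * (n - 1) * Nat.choose (n - 1) s := by ring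

end Aux

set_option maxHeartbeats 1000000

/-- for a Turán pair `(F,P)` with `P` minimal, `ex(n,F)` is
`4·C(n−1,r−2)`-smooth. -/
theorem statement_2 (r : ℕ) (F : HGraph r) (P : Pattern r)
    (hmin : P.Minimal) (hTP : IsTuranPair r F P) :
    ∀ n : ℕ, |deltaN r n F - dN r (n-1) F| ≤ 4 * ((n-1).choose (r-2) : ℝ) := by
  intro n
  have hRHS0 : (0:ℝ) ≤ 4 * (((n-1).choose (r-2) : ℕ) : ℝ) := by positivity
  have zeroGoal : (∀ m, exN r m F = 0) →
      |deltaN r n F - dN r (n-1) F| ≤ 4 * (((n-1).choose (r-2) : ℕ) : ℝ) := by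
    intro hz
    rw [show deltaN r n F = 0 by simp [deltaN, hz],
        show dN r (n-1) F = 0 by simp [dN, hz], sub_zero, abs_zero]
    exact hRHS0
  rcases Nat.eq_zero_or_pos r with rfl | hr
  · -- r = 0
    have hle : ∀ m, exN 0 m F ≤ 1 := by
      intro m
      refine Aux.exN_le fun H _ _ => ?_
      refine Finset.card_le_one.mpr fun x hx y hy => ?_
      rw [Finset.card_eq_zero.mp (H.edges_card x hx), Finset.card_eq_zero.mp (H.edges_card y hy)]
    have h1 : (exN 0 n F : ℝ) ≤ 1 := by exact_mod_cast hle n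
    have h2 : (exN 0 (n-1) F : ℝ) ≤ 1 := by exact_mod_cast hle (n-1)
    have h3 : (0:ℝ) ≤ (exN 0 n F : ℝ) := Nat.cast_nonneg _
    have h4 : (0:ℝ) ≤ (exN 0 (n-1) F : ℝ) := Nat.cast_nonneg _
    have hc : ((0:ℕ) - 2) = 0 := rfl
    rw [show dN 0 (n-1) F = 0 by simp [dN], sub_zero, deltaN, hc, Nat.choose_zero_right,
      Nat.cast_one, abs_le]
    constructor <;> linarith
  -- r ≥ 1
  by_cases hFe : F.edges = ∅
  · by_cases hFv : F.verts = ∅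
    · apply zeroGoal
      intro m
      have hcopy : ∀ H : HGraph r, F.IsCopyIn H := fun H =>
        ⟨id, by simp [hFv], by simp [hFv], by simp [hFe]⟩
      exact Nat.le_zero.mp (Aux.exN_le fun H _ hf => absurd (hcopy H) hf)
    · have hk1 : 1 ≤ F.verts.card :=
        Finset.card_pos.mpr (Finset.nonempty_iff_ne_empty.mpr hFv)
      rcases eq_or_lt_of_le hk1 with hk | hk2
      · -- |V(F)| = 1
        apply zeroGoal
        intro m
        refine Nat.le_zero.mp (Aux.exN_le fun H hc hf => ?_)
        rcases Nat.eq_zero_or_pos m with rfl | hm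
        · have hv : H.verts = ∅ := Finset.card_eq_zero.mp hc
          have hE : H.edges = ∅ := by
            rw [Finset.eq_empty_iff_forall_notMem]
            intro e he
            have h1 := H.edges_sub e he
            have h2 := H.edges_card e he
            rw [hv, Finset.subset_empty] at h1
            rw [h1, Finset.card_empty] at h2
            omega
          simp [hE]
        · exact absurd (Aux.copy_of_no_edges hFe (by omega)) hf
      · -- |V(F)| ≥ 2 : contradiction
        exfalso
        have hfree : ∀ H : HGraph r, H.verts.card = F.verts.card - 1 → ¬ F.IsCopyIn H := by
          intro H hc hcopy
          have := Aux.copy_card_le hcopy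
          omega
        set K := completeOn r (Finset.range (F.verts.card - 1)) with hK_def
        have hKv : K.verts = Finset.range (F.verts.card - 1) := rfl
        have hKc : K.verts.card = F.verts.card - 1 := by rw [hKv, Finset.card_range]
        have hKe : K.edges = Finset.powersetCard r (Finset.range (F.verts.card - 1)) := by
          refine Finset.filter_true_of_mem fun e he => ?_
          rw [Finset.mem_powersetCard] at he
          exact he
        have hKcard : K.edges.card = (F.verts.card - 1).choose r := by
          rw [hKe, Finset.card_powersetCard, Finset.card_range]
        have hex : exN r (F.verts.card - 1) F = (F.verts.card - 1).choose r :=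
          le_antisymm (Aux.exN_le fun H hc _ => hc ▸ Aux.edges_card_le H)
            (hKcard ▸ Aux.le_exN hKc (hfree K hKc))
        obtain ⟨part, hpart, -⟩ := hTP.2 K (hfree K hKc) (by rw [hKcard, hKc, hex])
        have h0 : (0:ℕ) ∈ K.verts := by
          rw [hKv]
          exact Finset.mem_range.mpr (by omega)
        have hi := hpart 0 h0
        have hGcons := Aux.blowup_isConstruction
          (P := P) (V := Finset.range F.verts.card) (part := fun _ => part 0) (fun v _ => hi)
        refine hTP.1 _ hGcons (Aux.copy_of_no_edges hFe ?_)
        rw [Aux.blowup_verts, Finset.card_range]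
  · -- main case : F has an edge
    have hFE : F.edges.Nonempty := Finset.nonempty_iff_ne_empty.mpr hFe
    have hfreeEmpty : ∀ m, ∃ H : HGraph r, H.verts.card = m ∧ ¬ F.IsCopyIn H := by
      intro m
      refine ⟨emptyOn r (Finset.range m), by simp [emptyOn, HGraph.ofEdges], ?_⟩
      rintro ⟨f, -, -, hedges⟩
      obtain ⟨e0, he0⟩ := hFE
      have := hedges e0 he0
      simp [emptyOn, HGraph.ofEdges] at this
    rcases Nat.lt_or_ge n (r+1) with hn | hn
    · -- n ≤ r
      rcases Nat.eq_zero_or_pos n with rfl | hn1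
      · rw [show deltaN r 0 F = 0 by simp [deltaN], show dN r (0-1) F = 0 by simp [dN],
          sub_zero, abs_zero]
        exact hRHS0
      · have hsmall : ∀ m, m < r → exN r m F = 0 := by
          intro m hm
          refine Nat.le_zero.mp (Aux.exN_le fun H hc _ => ?_)
          have hE : H.edges = ∅ := by
            rw [Finset.eq_empty_iff_forall_notMem]
            intro e he
            have h1 := Finset.card_le_card (H.edges_sub e he)
            rw [H.edges_card e he, hc] at h1
            omega
          simp [hE]
        have hb0 : exN r (n-1) F = 0 := hsmall (n-1) (by omega)
        rw [show dN r (n-1) F = 0 by simp [dN, hb0], sub_zero, deltaN, hb0, Nat.cast_zero,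
          sub_zero]
        rcases Nat.lt_or_ge n r with hlt | hge
        · rw [hsmall n hlt]
          simpa using hRHS0
        · have hnr : n = r := by omega
          have ha1 : exN r n F ≤ 1 := by
            refine Aux.exN_le fun H hc _ => ?_
            have := Aux.edges_card_le H
            rwa [hc, hnr, Nat.choose_self] at this
          have hch : 1 ≤ (n-1).choose (r-2) := Nat.choose_pos (by omega)
          rw [abs_of_nonneg (Nat.cast_nonneg _)]
          have h1 : (exN r n F : ℝ) ≤ 1 := by exact_mod_cast ha1
          have h2 : (1:ℝ) ≤ (((n-1).choose (r-2) : ℕ) : ℝ) := by exact_mod_cast hch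
          linarith
    · -- MAIN: n ≥ r + 1
      obtain ⟨m, rfl⟩ : ∃ m, n = m + 1 := ⟨n - 1, by omega⟩
      have hm : r ≤ m := by omega
      simp only [Nat.add_sub_cancel] at hRHS0 ⊢
      obtain ⟨Hb, hbcard, hbfree, hbex⟩ := Aux.exists_extremal (hfreeEmpty m)
      obtain ⟨Ha, hacard, hafree, haex⟩ := Aux.exists_extremal (hfreeEmpty (m+1))
      set a := exN r (m+1) F with ha_def
      set b := exN r m F with hb_def
      -- Step 1 : upper bound via min degree
      have hanon : Ha.verts.Nonempty := Finset.card_pos.mp (by rw [hacard]; omega)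
      obtain ⟨v, hv, hvmin⟩ := Finset.exists_min_image Ha.verts Ha.deg hanon
      have h1a : (m+1) * Ha.deg v ≤ r * a := by
        calc (m+1) * Ha.deg v = Ha.verts.card • Ha.deg v := by rw [hacard, smul_eq_mul]
          _ ≤ ∑ u ∈ Ha.verts, Ha.deg u := Finset.card_nsmul_le_sum _ _ _ hvmin
          _ = r * a := by rw [Aux.sum_deg, haex]
      have hdelcard : (Ha.deleteVert v).edges.card + Ha.deg v = a := by
        rw [Aux.deleteVert_edges]
        have hsplit := Finset.card_filter_add_card_filter_not
          (s := Ha.edges) (p := fun e => v ∈ e)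
        unfold HGraph.deg
        rw [← haex]
        omega
      have hdelfree : ¬ F.IsCopyIn (Ha.deleteVert v) := fun hc =>
        hafree (Aux.copy_mono (Finset.erase_subset v Ha.verts)
          (by rw [Aux.deleteVert_edges]; exact Finset.filter_subset _ _) hc)
      have hdelcardv : (Ha.deleteVert v).verts.card = m := by
        show (Ha.verts.erase v).card = m
        rw [Finset.card_erase_of_mem hv, hacard]
        omega
      have hdelle : (Ha.deleteVert v).edges.card ≤ b := Aux.le_exN hdelcardv hdelfree
      have h1 : (m+1) * a ≤ (m+1) * b + r * a := by
        have hle : a ≤ b + Ha.deg v := by omega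
        have := Nat.mul_le_mul_left (m+1) hle
        rw [Nat.mul_add] at this
        omega
      -- Step 2 : lower bound via cloning a max degree vertex
      obtain ⟨part, hpart, hedge⟩ := hTP.2 Hb hbfree (by rw [hbcard]; exact hbex)
      have hbnon : Hb.verts.Nonempty := Finset.card_pos.mp (by rw [hbcard]; omega)
      obtain ⟨u, hu, humax⟩ := Finset.exists_max_image Hb.verts Hb.deg hbnon
      have h2a : r * b ≤ m * Hb.deg u := by
        calc r * b = ∑ x ∈ Hb.verts, Hb.deg x := by rw [Aux.sum_deg, hbex]
          _ ≤ Hb.verts.card • Hb.deg u := Finset.sum_le_card_nsmul _ _ _ humax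
          _ = m * Hb.deg u := by rw [hbcard, smul_eq_mul]
      set w := Hb.verts.sup id + 1 with hw_def
      have hw : w ∉ Hb.verts := by
        intro hmem
        have := Finset.le_sup (f := id) hmem
        simp only [id] at this
        omega
      set part' := Function.update part w (part u) with hpart'_def
      set V' := insert w Hb.verts with hV'_def
      have hpart'' : ∀ x ∈ V', part' x ∈ P.idx := by
        intro x hx
        rcases Finset.mem_insert.mp hx with rfl | hx'
        · rw [hpart'_def, Function.update_self]
          exact hpart u hu
        · rw [hpart'_def, Function.update_of_ne (by rintro rfl; exact hw hx')]
          exact hpart x hx'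
      have hH'cons := Aux.blowup_isConstruction (P := P) hpart''
      have hH'free := hTP.1 _ hH'cons
      have hH'card : (Aux.blowup r P V' part').verts.card = m + 1 := by
        rw [Aux.blowup_verts, hV'_def, Finset.card_insert_of_notMem hw, hbcard]
      have hEsub : Hb.edges ⊆ (Aux.blowup r P V' part').edges := by
        intro e he
        obtain ⟨hsub, hcard, hprof⟩ := (hedge e).mp he
        refine Aux.mem_blowup_edges.mpr ⟨hsub.trans (Finset.subset_insert w _), hcard, ?_⟩
        have hmap : Multiset.map part' e.val = Multiset.map part e.val :=
          Multiset.map_congr rfl fun x hx =>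
            Function.update_of_ne (by rintro rfl; exact hw (hsub hx)) _ _
        rwa [hmap]
      set T := (Hb.edges.filter fun e => u ∈ e).image (fun e => insert w (e.erase u)) with hT_def
      have hTsub : T ⊆ (Aux.blowup r P V' part').edges := by
        intro e' he'
        obtain ⟨e, he, rfl⟩ := Finset.mem_image.mp he'
        obtain ⟨heE, hue⟩ := Finset.mem_filter.mp he
        obtain ⟨hsub, hcard, hprof⟩ := (hedge e).mp heE
        have hwe : w ∉ e := fun h => hw (hsub h)
        have hwe' : w ∉ e.erase u := fun h => hwe (Finset.erase_subset u e h)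
        refine Aux.mem_blowup_edges.mpr ⟨?_, ?_, ?_⟩
        · exact Finset.insert_subset_insert w ((Finset.erase_subset u e).trans hsub)
        · rw [Finset.card_insert_of_notMem hwe', Finset.card_erase_of_mem hue, hcard]
          omega
        · rw [Finset.insert_val_of_notMem hwe', Multiset.map_cons]
          rw [show part' w = part u from Function.update_self _ _ _]
          have hmape : Multiset.map part' (e.erase u).val = Multiset.map part (e.erase u).val :=
            Multiset.map_congr rfl fun x hx =>
              Function.update_of_ne (by rintro rfl; exact hwe' hx) _ _
          rw [hmape, Finset.erase_val]
          have hcons : (part u) ::ₘ Multiset.map part (e.val.erase u) = Multiset.map part e.val := by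
            rw [← Multiset.map_cons, Multiset.cons_erase (Finset.mem_def.mp hue)]
          rw [hcons]
          exact hprof
      have hTcard : T.card = Hb.deg u := by
        rw [hT_def, Finset.card_image_of_injOn]
        · rfl
        · intro e1 h1' e2 h2' heq
          simp only [Finset.coe_filter, Set.mem_setOf_eq] at h1' h2'
          have hw1 : w ∉ e1.erase u :=
            fun h => hw (Hb.edges_sub e1 h1'.1 (Finset.erase_subset u e1 h))
          have hw2 : w ∉ e2.erase u :=
            fun h => hw (Hb.edges_sub e2 h2'.1 (Finset.erase_subset u e2 h))
          have heq2 := congrArg (fun s => Finset.erase s w) heq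
          simp only at heq2
          rw [Finset.erase_insert hw1, Finset.erase_insert hw2] at heq2
          have heq3 := congrArg (insert u) heq2
          rwa [Finset.insert_erase h1'.2, Finset.insert_erase h2'.2] at heq3
      have hdisj : Disjoint Hb.edges T := by
        rw [Finset.disjoint_left]
        intro e he heT
        obtain ⟨e0, -, rfl⟩ := Finset.mem_image.mp heT
        exact hw (Hb.edges_sub _ he (Finset.mem_insert_self w _))
      have h2b : b + Hb.deg u ≤ a := by
        have hcount : b + Hb.deg u ≤ (Aux.blowup r P V' part').edges.card := by
          calc b + Hb.deg u = Hb.edges.card + T.card := by rw [hbex, hTcard]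
            _ = (Hb.edges ∪ T).card := (Finset.card_union_of_disjoint hdisj).symm
            _ ≤ _ := Finset.card_le_card (Finset.union_subset hEsub hTsub)
        exact hcount.trans (Aux.le_exN hH'card hH'free)
      have h2 : m * b + r * b ≤ m * a := by
        have := Nat.mul_le_mul_left m h2b
        rw [Nat.mul_add] at this
        omega
      have hble : b ≤ m.choose r := by
        rw [← hbex, ← hbcard]
        exact Aux.edges_card_le Hb
      have hchoose := Aux.choose_ineq hr hn
      simp only [Nat.add_sub_cancel] at hchoose
      -- pass to the reals
      have hMpos : (0:ℝ) < (m:ℝ) := by exact_mod_cast Nat.lt_of_lt_of_le hr hm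
      have hRge : (1:ℝ) ≤ (r:ℝ) := by exact_mod_cast hr
      have hMR : (r:ℝ) ≤ (m:ℝ) := by exact_mod_cast hm
      have h1R : ((m:ℝ)+1) * (a:ℝ) ≤ ((m:ℝ)+1) * (b:ℝ) + (r:ℝ) * (a:ℝ) := by
        exact_mod_cast h1
      have h2R : (m:ℝ) * (b:ℝ) + (r:ℝ) * (b:ℝ) ≤ (m:ℝ) * (a:ℝ) := by exact_mod_cast h2
      have hbleR : (b:ℝ) ≤ (m.choose r : ℝ) := by exact_mod_cast hble
      have hchR : (r:ℝ) * ((r:ℝ)-1) * (m.choose r : ℝ)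
          ≤ ((m:ℝ)+1-(r:ℝ)) * (m:ℝ) * (m.choose (r-2) : ℝ) := by
        have hc := Nat.cast_le (α := ℝ) |>.mpr hchoose
        push_cast [Nat.cast_sub hr, Nat.cast_sub (show r ≤ m + 1 by omega)] at hc
        convert hc using 2 <;> ring
      have hC2 : (0:ℝ) ≤ (m.choose (r-2) : ℝ) := Nat.cast_nonneg _
      have hgoal : deltaN r (m+1) F = (a:ℝ) - (b:ℝ) := by
        simp [deltaN, Nat.add_sub_cancel, ha_def, hb_def]
      have hdn : dN r m F = (r:ℝ) * (b:ℝ) / (m:ℝ) := rfl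
      rw [hgoal, hdn, abs_le]
      have hlow : (r:ℝ) * (b:ℝ) / (m:ℝ) ≤ (a:ℝ) - (b:ℝ) := by
        rw [div_le_iff₀ hMpos]
        nlinarith [h2R]
      constructor
      · nlinarith [hlow, hC2]
      · have e1 : ((m:ℝ)+1-(r:ℝ)) * (a:ℝ) ≤ ((m:ℝ)+1) * (b:ℝ) := by linarith [h1R]
        have e2 : (m:ℝ) * (((m:ℝ)+1-(r:ℝ)) * (a:ℝ)) ≤ (m:ℝ) * (((m:ℝ)+1) * (b:ℝ)) :=
          mul_le_mul_of_nonneg_left e1 (le_of_lt hMpos)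
        have e3 : (r:ℝ) * ((r:ℝ)-1) * (b:ℝ) ≤ (r:ℝ) * ((r:ℝ)-1) * (m.choose r : ℝ) :=
          mul_le_mul_of_nonneg_left hbleR (by nlinarith [hRge])
        have hC2M : (0:ℝ) ≤ (m.choose (r-2) : ℝ) * (m:ℝ) * ((m:ℝ)+1-(r:ℝ)) := by
          apply mul_nonneg (mul_nonneg hC2 (le_of_lt hMpos))
          linarith
        have hMRpos : (0:ℝ) < (m:ℝ)+1-(r:ℝ) := by linarith
        have bigkey : (((a:ℝ) - (b:ℝ)) * (m:ℝ)) * ((m:ℝ)+1-(r:ℝ))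
            ≤ ((r:ℝ) * (b:ℝ) + 4 * (m.choose (r-2) : ℝ) * (m:ℝ)) * ((m:ℝ)+1-(r:ℝ)) := by
          nlinarith [e2, e3, hchR, hC2M]
        have key : ((a:ℝ) - (b:ℝ)) * (m:ℝ)
            ≤ (r:ℝ) * (b:ℝ) + 4 * (m.choose (r-2) : ℝ) * (m:ℝ) :=
          le_of_mul_le_mul_right bigkey hMRpos
        have hdiv : (a:ℝ) - (b:ℝ)
            ≤ ((r:ℝ) * (b:ℝ) + 4 * (m.choose (r-2) : ℝ) * (m:ℝ)) / (m:ℝ) :=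
          (le_div_iff₀ hMpos).mpr key
        have hsplit : ((r:ℝ) * (b:ℝ) + 4 * (m.choose (r-2) : ℝ) * (m:ℝ)) / (m:ℝ)
            = (r:ℝ) * (b:ℝ) / (m:ℝ) + 4 * (m.choose (r-2) : ℝ) := by
          field_simp
        rw [hsplit] at hdiv
        linarith


end DensityCH
end

section
/- Suppose that F is an r-graph on m vertices and P is a minimal pattern such that (F,P) is a Turán pair and F is edge-stable and weakly vertex-extendable with respect to P. Then there exists a constant c > 0 such that for all sufficiently large n, F is (c·C(n−1,r−1), ((1−π(F))/(8m))·C(n−1,r−1))-bounded; that is, every n-vertex F-free r-graph H with average degree d(H) ≥ d(n,F) − c·C(n−1,r−1) satisfies Δ(H) ≤ d(n,F) + ((1−π(F))/(8m))·C(n−1,r−1). -/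
open Filter

namespace DensityCH

section Aux
open Finset



variable {r : ℕ}

namespace HGraph

lemma ofEdges_verts (r : ℕ) (V : Finset ℕ) (E : Finset (Finset ℕ)) :
    (ofEdges r V E).verts = V := rfl

lemma ofEdges_edges_of_wf {r : ℕ} {V : Finset ℕ} {E : Finset (Finset ℕ)}
    (h : ∀ e ∈ E, e ⊆ V ∧ e.card = r) : (ofEdges r V E).edges = E :=
  Finset.filter_true_of_mem h

lemma edges_subset_powersetCard (H : HGraph r) :
    H.edges ⊆ Finset.powersetCard r H.verts := by
  intro e he
  exact Finset.mem_powersetCard.mpr ⟨H.edges_sub e he, H.edges_card e he⟩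

lemma card_edges_le (H : HGraph r) : H.edges.card ≤ H.verts.card.choose r := by
  simpa [Finset.card_powersetCard] using Finset.card_le_card H.edges_subset_powersetCard

lemma induce_verts (H : HGraph r) (S : Finset ℕ) : (H.induce S).verts = H.verts ∩ S := rfl

lemma induce_edges (H : HGraph r) (S : Finset ℕ) :
    (H.induce S).edges = H.edges.filter (· ⊆ S) := by
  show Finset.filter _ (Finset.filter _ _) = _
  rw [Finset.filter_filter]
  apply Finset.filter_congr
  intro e he
  constructor
  · rintro ⟨h1, _, _⟩; exact h1
  · intro h1
    exact ⟨h1, Finset.subset_inter (H.edges_sub e he) h1, H.edges_card e he⟩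

lemma deleteVert_verts (H : HGraph r) (v : ℕ) : (H.deleteVert v).verts = H.verts.erase v := rfl

lemma deleteVert_edges (H : HGraph r) (v : ℕ) :
    (H.deleteVert v).edges = H.edges.filter (v ∉ ·) := by
  show Finset.filter _ (Finset.filter _ _) = _
  rw [Finset.filter_filter]
  apply Finset.filter_congr
  intro e he
  constructor
  · rintro ⟨h1, _, _⟩; exact h1
  · intro h1
    refine ⟨h1, fun x hx => Finset.mem_erase.mpr ⟨?_, H.edges_sub e he hx⟩, H.edges_card e he⟩
    rintro rfl; exact h1 hx

lemma deg_eq (H : HGraph r) (v : ℕ) : H.deg v = (H.edges.filter fun e => v ∈ e).card := rfl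

/-- F-freeness transfers to subgraphs. -/
lemma not_copy_of_sub {F H H' : HGraph r} (hfree : ¬ F.IsCopyIn H)
    (hv : H'.verts ⊆ H.verts) (he : H'.edges ⊆ H.edges) : ¬ F.IsCopyIn H' := by
  rintro ⟨f, h1, h2, h3⟩
  exact hfree ⟨f, h1, fun v hvv => hv (h2 v hvv), fun e hee => he (h3 e hee)⟩

end HGraph



variable {r : ℕ}

lemma exN_set_bddAbove (F : HGraph r) (n : ℕ) :
    BddAbove {m | ∃ H : HGraph r, H.verts.card = n ∧ ¬ F.IsCopyIn H ∧ H.edges.card = m} := by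
  refine ⟨n.choose r, ?_⟩
  rintro m ⟨H, hn, -, rfl⟩
  simpa [hn] using H.card_edges_le

lemma le_exN {F H : HGraph r} {n : ℕ} (hn : H.verts.card = n) (hfree : ¬ F.IsCopyIn H) :
    H.edges.card ≤ exN r n F :=
  le_csSup (exN_set_bddAbove F n) ⟨H, hn, hfree, rfl⟩

lemma exN_le_choose (F : HGraph r) (n : ℕ) : exN r n F ≤ n.choose r := by
  apply csSup_le'
  rintro m ⟨H, hn, -, rfl⟩
  simpa [hn] using H.card_edges_le

/-- The empty graph on `n` vertices. -/
lemma exists_free (F : HGraph r) (hF : F.edges.Nonempty) (n : ℕ) :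
    ∃ H : HGraph r, H.verts.card = n ∧ ¬ F.IsCopyIn H ∧ H.edges = ∅ := by
  refine ⟨⟨Finset.range n, ∅, by simp, by simp⟩, by simp, ?_, rfl⟩
  rintro ⟨f, -, -, h3⟩
  obtain ⟨e, he⟩ := hF
  simpa using h3 e he

lemma exists_extremal (F : HGraph r) (hF : F.edges.Nonempty) (n : ℕ) :
    ∃ H : HGraph r, H.verts.card = n ∧ ¬ F.IsCopyIn H ∧ H.edges.card = exN r n F := by
  obtain ⟨H0, hn0, hfree0, -⟩ := exists_free F hF n
  have hne : {m | ∃ H : HGraph r, H.verts.card = n ∧ ¬ F.IsCopyIn H ∧ H.edges.card = m}.Nonempty :=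
    ⟨H0.edges.card, H0, hn0, hfree0, rfl⟩
  have := Nat.sSup_mem hne (exN_set_bddAbove F n)
  exact this



variable {r : ℕ}

lemma exists_injOn (s t : Finset ℕ) (h : s.card ≤ t.card) :
    ∃ f : ℕ → ℕ, Set.InjOn f ↑s ∧ ∀ a ∈ s, f a ∈ t := by
  obtain ⟨t', ht's, ht'⟩ := t.exists_subset_card_eq h
  refine ⟨fun x => if hx : x ∈ s then
      (t'.orderEmbOfFin ht' ((s.orderIsoOfFin rfl).symm ⟨x, hx⟩)) else 0, ?_, ?_⟩
  · intro x hx y hy hxy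
    simp only [Finset.mem_coe] at hx hy
    simp only [dif_pos hx, dif_pos hy] at hxy
    have h2 := (t'.orderEmbOfFin ht').injective hxy
    have h1 := (s.orderIsoOfFin rfl).symm.injective h2
    simpa using congrArg Subtype.val h1
  · intro a ha
    simp only [dif_pos ha]
    exact ht's (t'.orderEmbOfFin_mem ht' _)

lemma copy_of_complete {F H : HGraph r} (hm : F.verts.card ≤ H.verts.card)
    (hcomplete : H.edges = Finset.powersetCard r H.verts) : F.IsCopyIn H := by
  obtain ⟨f, hinj, hmem⟩ := exists_injOn F.verts H.verts hm
  refine ⟨f, hinj, hmem, ?_⟩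
  intro e he
  rw [hcomplete, Finset.mem_powersetCard]
  constructor
  · intro y hy
    obtain ⟨x, hx, rfl⟩ := Finset.mem_image.mp hy
    exact hmem x (F.edges_sub e he hx)
  · rw [Finset.card_image_of_injOn (hinj.mono (by exact_mod_cast F.edges_sub e he))]
    exact F.edges_card e he

lemma exN_lt_choose (F : HGraph r) (hF : F.edges.Nonempty) {n : ℕ}
    (hm : F.verts.card ≤ n) (hr : r ≤ n) : exN r n F < n.choose r := by
  refine lt_of_le_of_ne (exN_le_choose F n) ?_
  intro heq
  obtain ⟨H, hn, hfree, hcard⟩ := exists_extremal F hF n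
  apply hfree
  apply copy_of_complete (by omega)
  apply Finset.eq_of_subset_of_card_le H.edges_subset_powersetCard
  rw [Finset.card_powersetCard, hn, hcard, heq]

lemma kns (F : HGraph r) (hF : F.edges.Nonempty) {n : ℕ} (hn : r < n) :
    (n - r) * exN r n F ≤ n * exN r (n - 1) F := by
  obtain ⟨H, hn', hfree, hcard⟩ := exists_extremal F hF n
  have key : ∑ x ∈ H.verts, (H.edges.filter (fun e => x ∉ e)).card
      = H.edges.card * (n - r) := by
    calc ∑ x ∈ H.verts, (H.edges.filter (fun e => x ∉ e)).card
        = ∑ x ∈ H.verts, ∑ e ∈ H.edges, if x ∉ e then 1 else 0 :=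
          Finset.sum_congr rfl (fun x _ => Finset.card_filter _ _)
      _ = ∑ e ∈ H.edges, ∑ x ∈ H.verts, if x ∉ e then 1 else 0 := Finset.sum_comm
      _ = ∑ _e ∈ H.edges, (n - r) := by
          refine Finset.sum_congr rfl (fun e he => ?_)
          have h1 : (∑ x ∈ H.verts, if x ∉ e then 1 else 0)
              = (H.verts.filter (fun x => x ∉ e)).card := (Finset.card_filter _ _).symm
          rw [h1, ← Finset.sdiff_eq_filter, Finset.card_sdiff_of_subset (H.edges_sub e he), hn',
            H.edges_card e he]
      _ = H.edges.card * (n - r) := by rw [Finset.sum_const, smul_eq_mul]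
  have each : ∀ x ∈ H.verts, (H.edges.filter (fun e => x ∉ e)).card ≤ exN r (n - 1) F := by
    intro x hx
    set H' := H.induce (H.verts.erase x) with hH'
    have hv : H'.verts = H.verts.erase x := by
      rw [hH', HGraph.induce_verts, Finset.inter_eq_right.mpr (Finset.erase_subset _ _)]
    have he : H'.edges = H.edges.filter (fun e => x ∉ e) := by
      rw [hH', HGraph.induce_edges]
      apply Finset.filter_congr
      intro e heE
      constructor
      · intro h; exact (Finset.subset_erase.mp h).2
      · intro h; exact Finset.subset_erase.mpr ⟨H.edges_sub e heE, h⟩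
    have hfree' : ¬ F.IsCopyIn H' := by
      apply HGraph.not_copy_of_sub hfree
      · rw [hv]; exact Finset.erase_subset _ _
      · rw [he]; exact Finset.filter_subset _ _
    have hcard' : H'.verts.card = n - 1 := by rw [hv, Finset.card_erase_of_mem hx, hn']
    rw [← he]
    exact le_exN hcard' hfree'
  calc (n - r) * exN r n F = H.edges.card * (n - r) := by rw [hcard, mul_comm]
    _ = ∑ x ∈ H.verts, (H.edges.filter (fun e => x ∉ e)).card := key.symm
    _ ≤ H.verts.card * exN r (n - 1) F := by
        classical
        calc _ ≤ ∑ _x ∈ H.verts, exN r (n-1) F := Finset.sum_le_sum each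
          _ = H.verts.card * exN r (n-1) F := by rw [Finset.sum_const, smul_eq_mul]
    _ = n * exN r (n - 1) F := by rw [hn']



variable {r : ℕ}

lemma choose_id1 {n : ℕ} (hr : 1 ≤ r) (hn : 1 ≤ n) :
    n * ((n - 1).choose (r - 1)) = n.choose r * r := by
  obtain ⟨n', rfl⟩ : ∃ n', n = n' + 1 := ⟨n - 1, by omega⟩
  obtain ⟨r', rfl⟩ : ∃ r', r = r' + 1 := ⟨r - 1, by omega⟩
  simpa using Nat.add_one_mul_choose_eq n' r'

lemma choose_id2 {a : ℕ} (ha : 1 ≤ a) :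
    a * ((a - 1).choose r) = a.choose r * (a - r) := by
  obtain ⟨a', rfl⟩ : ∃ a', a = a' + 1 := ⟨a - 1, by omega⟩
  simp only [Nat.add_sub_cancel]
  exact (Nat.add_one_mul_choose_eq a' r).trans (Nat.choose_succ_right_eq (a' + 1) r)

lemma choose_id3 {n : ℕ} (hr : 2 ≤ r) (hn : 2 ≤ n) :
    (n - 1) * ((n - 2).choose (r - 2)) = (n - 1).choose (r - 1) * (r - 1) := by
  have := choose_id1 (n := n - 1) (r := r - 1) (by omega) (by omega)
  have e1 : n - 1 - 1 = n - 2 := by omega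
  have e2 : r - 1 - 1 = r - 2 := by omega
  rw [e1, e2] at this
  exact this

lemma ratio_antitone_step (F : HGraph r) (hF : F.edges.Nonempty) {k : ℕ} (hk : r + 1 ≤ k) :
    (exN r k F : ℝ) / (k.choose r) ≤ (exN r (k - 1) F : ℝ) / ((k - 1).choose r) := by
  have hCk : 0 < (k.choose r : ℝ) := by exact_mod_cast Nat.choose_pos (by omega)
  have hCk1 : 0 < ((k - 1).choose r : ℝ) := by exact_mod_cast Nat.choose_pos (by omega)
  rw [div_le_div_iff₀ hCk hCk1]
  have hnat : exN r k F * ((k - 1).choose r) ≤ exN r (k - 1) F * (k.choose r) := by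
    have h1 : (k - r) * exN r k F ≤ k * exN r (k - 1) F := kns F hF (by omega)
    have h2 : k * ((k - 1).choose r) = k.choose r * (k - r) := choose_id2 (by omega)
    have h3 : k * (exN r k F * ((k - 1).choose r)) ≤ k * (exN r (k - 1) F * (k.choose r)) := by
      calc k * (exN r k F * ((k - 1).choose r)) = (k * ((k - 1).choose r)) * exN r k F := by ring
        _ = k.choose r * ((k - r) * exN r k F) := by rw [h2]; ring
        _ ≤ k.choose r * (k * exN r (k - 1) F) := Nat.mul_le_mul_left _ h1
        _ = k * (exN r (k - 1) F * (k.choose r)) := by ring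
    exact Nat.le_of_mul_le_mul_left h3 (by omega)
  exact_mod_cast hnat

lemma ratio_le_of_le (F : HGraph r) (hF : F.edges.Nonempty) {n₀ k : ℕ}
    (h0 : r ≤ n₀) (hk : n₀ ≤ k) :
    (exN r k F : ℝ) / (k.choose r) ≤ (exN r n₀ F : ℝ) / (n₀.choose r) := by
  induction k, hk using Nat.le_induction with
  | base => exact le_refl _
  | succ k hk ih =>
    have step := ratio_antitone_step F hF (k := k + 1) (by omega)
    simpa using step.trans ih



variable {r : ℕ}

lemma ratio_nonneg (F : HGraph r) (k : ℕ) : 0 ≤ (exN r k F : ℝ) / (k.choose r) := by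
  positivity

lemma ratio_le_one (F : HGraph r) (k : ℕ) : (exN r k F : ℝ) / (k.choose r) ≤ 1 := by
  rcases Nat.eq_zero_or_pos (k.choose r) with h0 | hpos
  · have : exN r k F = 0 := by have := exN_le_choose F k; omega
    simp [this]
  · rw [div_le_one (by exact_mod_cast hpos)]
    exact_mod_cast exN_le_choose F k

lemma pi_nonneg {F : HGraph r} {π : ℝ} (hπ : HasTuranDensity r F π) : 0 ≤ π :=
  ge_of_tendsto hπ (Eventually.of_forall fun k => ratio_nonneg F k)

lemma pi_le_one {F : HGraph r} {π : ℝ} (hπ : HasTuranDensity r F π) : π ≤ 1 :=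
  le_of_tendsto hπ (Eventually.of_forall fun k => ratio_le_one F k)

lemma pi_le_ratio {F : HGraph r} {π : ℝ} (hπ : HasTuranDensity r F π) (hF : F.edges.Nonempty)
    {n₀ : ℕ} (h0 : r ≤ n₀) : π ≤ (exN r n₀ F : ℝ) / (n₀.choose r) :=
  le_of_tendsto hπ (eventually_atTop.mpr ⟨n₀, fun k hk => ratio_le_of_le F hF h0 hk⟩)

lemma pi_lt_one {F : HGraph r} {π : ℝ} (hπ : HasTuranDensity r F π) (hF : F.edges.Nonempty) :
    π < 1 := by
  set n₀ := max F.verts.card r with hn₀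
  have h0 : r ≤ n₀ := le_max_right _ _
  have hCpos : 0 < (n₀.choose r : ℝ) := by exact_mod_cast Nat.choose_pos h0
  have hlt : exN r n₀ F < n₀.choose r :=
    exN_lt_choose F hF (le_max_left F.verts.card r) h0
  refine lt_of_le_of_lt (pi_le_ratio hπ hF h0) ?_
  rw [div_lt_one hCpos]
  exact_mod_cast hlt

lemma eventually_ratio_close {F : HGraph r} {π : ℝ} (hπ : HasTuranDensity r F π)
    {η : ℝ} (hη : 0 < η) :
    ∀ᶠ k : ℕ in atTop, |(exN r k F : ℝ) / (k.choose r) - π| < η := by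
  have := Metric.tendsto_atTop.mp hπ η hη
  obtain ⟨N, hN⟩ := this
  refine eventually_atTop.mpr ⟨N, fun k hk => ?_⟩
  have := hN k hk
  rwa [Real.dist_eq] at this



variable {r : ℕ}

lemma construction_extend {P : Pattern r} {G : HGraph r} (hG : P.IsConstruction G)
    {i₀ : ℕ} (hi₀ : i₀ ∈ P.idx) (X : Finset ℕ) :
    ∃ G2 : HGraph r, P.IsConstruction G2 ∧ G.verts ∪ X ⊆ G2.verts ∧ G.edges ⊆ G2.edges := by
  obtain ⟨part, hpart, hedge⟩ := hG
  classical
  set part' : ℕ → ℕ := fun v => if v ∈ G.verts then part v else i₀ with hp'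
  set V := G.verts ∪ X with hV
  set E := (Finset.powersetCard r V).filter (fun e => Multiset.map part' e.val ∈ P.mE) with hE
  have hEwf : ∀ e ∈ E, e ⊆ V ∧ e.card = r := by
    intro e he
    have := Finset.mem_powersetCard.mp (Finset.mem_filter.mp he).1
    exact this
  have hedges : (HGraph.ofEdges r V E).edges = E := HGraph.ofEdges_edges_of_wf hEwf
  refine ⟨HGraph.ofEdges r V E, ⟨part', ?_, ?_⟩, ?_, ?_⟩
  · intro v hv
    rw [HGraph.ofEdges_verts] at hv
    by_cases h : v ∈ G.verts
    · simpa [hp', h] using hpart v h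
    · simpa [hp', h] using hi₀
  · intro e
    rw [hedges, HGraph.ofEdges_verts]
    constructor
    · intro he
      obtain ⟨h1, h2⟩ := Finset.mem_filter.mp he
      obtain ⟨h3, h4⟩ := Finset.mem_powersetCard.mp h1
      exact ⟨h3, h4, h2⟩
    · rintro ⟨h1, h2, h3⟩
      exact Finset.mem_filter.mpr ⟨Finset.mem_powersetCard.mpr ⟨h1, h2⟩, h3⟩
  · rw [HGraph.ofEdges_verts]
  · intro e he
    rw [hedges]
    obtain ⟨h1, h2, h3⟩ := (hedge e).mp he
    have hmap : Multiset.map part' e.val = Multiset.map part e.val := by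
      apply Multiset.map_congr rfl
      intro x hx
      have : x ∈ G.verts := h1 (by exact_mod_cast hx)
      simp [hp', this]
    refine Finset.mem_filter.mpr ⟨Finset.mem_powersetCard.mpr ⟨h1.trans Finset.subset_union_left, h2⟩, ?_⟩
    rw [hmap]; exact h3

lemma subcon_mono {P : Pattern r} {H' H₂ : HGraph r} (hsub : P.IsSubconstruction H')
    {i₀ : ℕ} (hi₀ : i₀ ∈ P.idx) (he : H₂.edges ⊆ H'.edges) : P.IsSubconstruction H₂ := by
  obtain ⟨G, hG, hv, hEsub⟩ := hsub
  obtain ⟨G2, hG2, hv', hE'⟩ := construction_extend hG hi₀ H₂.verts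
  exact ⟨G2, hG2, fun x hx => hv' (Finset.mem_union_right _ hx),
    fun e heE => hE' (hEsub (he heE))⟩

lemma idx_nonempty {F : HGraph r} {P : Pattern r} (hTP : IsTuranPair r F P)
    (hF : F.edges.Nonempty) : ∃ i₀, i₀ ∈ P.idx := by
  obtain ⟨H₁, h1, hfree, hcard⟩ := exists_extremal F hF 1
  have hcon := hTP.2 H₁ hfree (by rw [h1]; exact hcard)
  obtain ⟨part, hpart, -⟩ := hcon
  have : H₁.verts.Nonempty := Finset.card_pos.mp (by omega)
  obtain ⟨v, hv⟩ := this
  exact ⟨part v, hpart v hv⟩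



variable {r : ℕ}

lemma pascal_cast {k s : ℕ} (hk : 1 ≤ k) (hs : 1 ≤ s) :
    (k.choose s : ℝ) = ((k - 1).choose (s - 1) : ℝ) + ((k - 1).choose s : ℝ) := by
  obtain ⟨a, rfl⟩ : ∃ a, k = a + 1 := ⟨k - 1, by omega⟩
  obtain ⟨b, rfl⟩ : ∃ b, s = b + 1 := ⟨s - 1, by omega⟩
  simp only [Nat.add_sub_cancel]
  exact_mod_cast congrArg (Nat.cast (R := ℝ)) (Nat.choose_succ_succ' a b)

lemma induce_card {H : HGraph r} {W : Finset ℕ} (hWV : W ⊆ H.verts) :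
    (H.induce W).verts = W := by
  rw [HGraph.induce_verts, Finset.inter_eq_right.mpr hWV]

lemma cleaning {F : HGraph r} {π ζ δ₁ : ℝ} {H2 : HGraph r} {u : ℕ} {n T : ℕ}
    (hr : 1 ≤ r) (hfree : ¬ F.IsCopyIn H2) (hu : u ∈ H2.verts) (hn : H2.verts.card = n)
    (hT1 : 1 ≤ n - T)
    (hbase : (π - δ₁) * (n.choose r : ℝ) ≤ (H2.edges.card : ℝ))
    (hupper : (exN r (n - T) F : ℝ) ≤ (π + δ₁) * ((n - T).choose r : ℝ))
    (hnum : (ζ + δ₁) * ((n - T).choose r : ℝ) < (ζ - δ₁) * (n.choose r : ℝ)) :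
    ∃ W : Finset ℕ, W ⊆ H2.verts ∧ u ∈ W ∧ n - T < W.card ∧
      ∀ v ∈ W, v ≠ u →
        (π - ζ) * (((W.card - 1).choose (r - 1) : ℕ) : ℝ) ≤ ((H2.induce W).deg v : ℝ) := by
  classical
  set inv : Finset ℕ → Prop := fun W =>
    (π - δ₁) * (n.choose r : ℝ) - (π - ζ) * ((n.choose r : ℝ) - (W.card.choose r : ℝ))
      ≤ ((H2.induce W).edges.card : ℝ) with hinv
  set valid : ℕ → Prop := fun k =>
    ∃ W : Finset ℕ, W ⊆ H2.verts ∧ u ∈ W ∧ n - T ≤ W.card ∧ W.card = k ∧ inv W with hvalid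
  have hvn : valid n := by
    refine ⟨H2.verts, subset_refl _, hu, by omega, hn, ?_⟩
    have hE : (H2.induce H2.verts).edges = H2.edges := by
      rw [HGraph.induce_edges]
      exact Finset.filter_true_of_mem (fun e he => H2.edges_sub e he)
    simp only [hinv, hE, hn]
    linarith [hbase]
  have hne : {k | valid k}.Nonempty := ⟨n, hvn⟩
  set k₀ := sInf {k | valid k} with hk₀
  have hk₀v : valid k₀ := Nat.sInf_mem hne
  obtain ⟨W, hWV, huW, hWlb, hWcard, hWinv⟩ := hk₀v
  have hverts : (H2.induce W).verts = W := induce_card hWV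
  have hfreeW : ¬ F.IsCopyIn (H2.induce W) := by
    apply HGraph.not_copy_of_sub hfree
    · rw [hverts]; exact hWV
    · rw [HGraph.induce_edges]; exact Finset.filter_subset _ _
  have hk₀gt : n - T < k₀ := by
    rcases lt_or_eq_of_le (by omega : n - T ≤ k₀) with h | h
    · exact h
    · exfalso
      have hcard' : (H2.induce W).verts.card = n - T := by rw [hverts, hWcard, ← h]
      have hle : ((H2.induce W).edges.card : ℝ) ≤ (exN r (n - T) F : ℝ) := by
        exact_mod_cast le_exN hcard' hfreeW
      have h2 : (W.card.choose r : ℝ) = ((n - T).choose r : ℝ) := by rw [hWcard, ← h]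
      simp only [hinv] at hWinv
      rw [h2] at hWinv
      nlinarith [hWinv, hle, hupper, hnum]
  have hk₀pos : 1 ≤ k₀ := by omega
  have hnobad : ∀ v ∈ W, v ≠ u →
      ¬ (((H2.induce W).deg v : ℝ) < (π - ζ) * (((k₀ - 1).choose (r - 1) : ℕ) : ℝ)) := by
    intro v hv hvu hbad
    set W' := W.erase v with hW'
    have hW'card : W'.card = k₀ - 1 := by rw [hW', Finset.card_erase_of_mem hv, hWcard]
    have hE' : (H2.induce W').edges = (H2.induce W).edges.filter (fun e => v ∉ e) := by
      rw [HGraph.induce_edges, HGraph.induce_edges, Finset.filter_filter]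
      exact Finset.filter_congr (fun e _ => Finset.subset_erase)
    have hsplit : (H2.induce W).deg v + (H2.induce W').edges.card
        = (H2.induce W).edges.card := by
      rw [HGraph.deg_eq, hE']
      exact Finset.card_filter_add_card_filter_not (p := fun e => v ∈ e)
    have hpas : (k₀.choose r : ℝ)
        = ((k₀ - 1).choose (r - 1) : ℝ) + ((k₀ - 1).choose r : ℝ) := pascal_cast hk₀pos hr
    have hval' : valid (k₀ - 1) := by
      refine ⟨W', (Finset.erase_subset _ _).trans hWV,
        Finset.mem_erase.mpr ⟨Ne.symm hvu, huW⟩, by omega, hW'card, ?_⟩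
      simp only [hinv, hW'card]
      simp only [hinv] at hWinv
      have hcast : ((H2.induce W').edges.card : ℝ)
          = ((H2.induce W).edges.card : ℝ) - ((H2.induce W).deg v : ℝ) := by
        have h9 := congrArg (Nat.cast (R := ℝ)) hsplit
        push_cast at h9
        linarith
      rw [hcast]
      rw [hWcard, hpas] at hWinv
      linarith [hWinv, hbad]
    have := Nat.sInf_le (by exact hval' : (k₀ - 1) ∈ {k | valid k})
    omega
  refine ⟨W, hWV, huW, by omega, ?_⟩
  intro v hv hvu
  have := hnobad v hv hvu
  rw [hWcard]
  linarith [not_lt.mp this]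



variable {r : ℕ}

lemma card_pair_filter_le (H : HGraph r) {u x : ℕ} (hux : u ≠ x) (hu : u ∈ H.verts)
    (hx : x ∈ H.verts) :
    (H.edges.filter (fun e => u ∈ e ∧ x ∈ e)).card ≤ (H.verts.card - 2).choose (r - 2) := by
  classical
  have hmaps : ∀ e ∈ H.edges.filter (fun e => u ∈ e ∧ x ∈ e),
      e \ {u, x} ∈ Finset.powersetCard (r - 2) ((H.verts.erase u).erase x) := by
    intro e he
    obtain ⟨heE, hue, hxe⟩ := Finset.mem_filter.mp he
    refine Finset.mem_powersetCard.mpr ⟨?_, ?_⟩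
    · intro y hy
      obtain ⟨hy1, hy2⟩ := Finset.mem_sdiff.mp hy
      have hyv := H.edges_sub e heE hy1
      have : y ≠ u ∧ y ≠ x := by
        constructor <;> rintro rfl <;> simp at hy2
      exact Finset.mem_erase.mpr ⟨this.2, Finset.mem_erase.mpr ⟨this.1, hyv⟩⟩
    · have hpair : ({u, x} : Finset ℕ) ⊆ e := by
        intro y hy
        rcases Finset.mem_insert.mp hy with rfl | hy
        · exact hue
        · rw [Finset.mem_singleton.mp hy]; exact hxe
      rw [Finset.card_sdiff_of_subset hpair, Finset.card_pair hux, H.edges_card e heE]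
  have hinj : ∀ e₁ ∈ H.edges.filter (fun e => u ∈ e ∧ x ∈ e),
      ∀ e₂ ∈ H.edges.filter (fun e => u ∈ e ∧ x ∈ e), e₁ \ {u, x} = e₂ \ {u, x} → e₁ = e₂ := by
    intro e₁ h₁ e₂ h₂ heq
    obtain ⟨h1E, h1u, h1x⟩ := Finset.mem_filter.mp h₁
    obtain ⟨h2E, h2u, h2x⟩ := Finset.mem_filter.mp h₂
    have hp1 : ({u, x} : Finset ℕ) ⊆ e₁ := by
      intro y hy; rcases Finset.mem_insert.mp hy with rfl | hy
      · exact h1u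
      · rw [Finset.mem_singleton.mp hy]; exact h1x
    have hp2 : ({u, x} : Finset ℕ) ⊆ e₂ := by
      intro y hy; rcases Finset.mem_insert.mp hy with rfl | hy
      · exact h2u
      · rw [Finset.mem_singleton.mp hy]; exact h2x
    rw [← Finset.sdiff_union_of_subset hp1, ← Finset.sdiff_union_of_subset hp2, heq]
  have := Finset.card_le_card_of_injOn (fun e => e \ {u, x}) (fun e he => hmaps e he)
    (fun e₁ h₁ e₂ h₂ heq => hinj e₁ h₁ e₂ h₂ heq)
  rw [Finset.card_powersetCard] at this
  refine this.trans ?_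
  apply Nat.choose_le_choose
  rw [Finset.card_erase_of_mem (Finset.mem_erase.mpr ⟨hux.symm, hx⟩),
    Finset.card_erase_of_mem hu]
  omega

lemma card_loss_le (H : HGraph r) {u : ℕ} (hu : u ∈ H.verts) {W : Finset ℕ} (huW : u ∈ W) :
    (H.edges.filter (fun e => u ∈ e ∧ ¬ e ⊆ W)).card
      ≤ (H.verts \ W).card * ((H.verts.card - 2).choose (r - 2)) := by
  classical
  have hsub : H.edges.filter (fun e => u ∈ e ∧ ¬ e ⊆ W)
      ⊆ (H.verts \ W).biUnion (fun x => H.edges.filter (fun e => u ∈ e ∧ x ∈ e)) := by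
    intro e he
    obtain ⟨heE, hue, hnsub⟩ := Finset.mem_filter.mp he
    obtain ⟨x, hxe, hxW⟩ := Finset.not_subset.mp hnsub
    refine Finset.mem_biUnion.mpr ⟨x, Finset.mem_sdiff.mpr ⟨H.edges_sub e heE hxe, hxW⟩, ?_⟩
    exact Finset.mem_filter.mpr ⟨heE, hue, hxe⟩
  refine (Finset.card_le_card hsub).trans ?_
  refine (Finset.card_biUnion_le).trans ?_
  refine Finset.sum_le_card_nsmul _ _ _ (fun x hx => ?_) |>.trans (by rw [smul_eq_mul])
  obtain ⟨hxv, hxW⟩ := Finset.mem_sdiff.mp hx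
  exact card_pair_filter_le H (fun h => hxW (h ▸ huW)) hu hxv



variable {r : ℕ}

lemma choose_decay {k n : ℕ} (hr : 1 ≤ r) (hk : 1 ≤ k) (hkn : k ≤ n) :
    n * (k.choose r) ≤ k * (n.choose r) := by
  induction n, hkn using Nat.le_induction with
  | base => exact le_refl _
  | succ n hn ih =>
    have hstep : (n + 1) * (n.choose r) ≤ n * ((n + 1).choose r) := by
      have h2 : (n + 1) * (n.choose r) = (n + 1).choose r * (n + 1 - r) := by
        have := choose_id2 (r := r) (a := n + 1) (by omega)
        simpa using this
      rw [h2]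
      calc (n + 1).choose r * (n + 1 - r) ≤ (n + 1).choose r * n :=
            Nat.mul_le_mul_left _ (by omega)
        _ = n * ((n + 1).choose r) := Nat.mul_comm _ _
    have hmain : n * ((n + 1) * (k.choose r)) ≤ n * (k * ((n + 1).choose r)) := by
      calc n * ((n + 1) * (k.choose r)) = (n + 1) * (n * (k.choose r)) := by ring
        _ ≤ (n + 1) * (k * (n.choose r)) := Nat.mul_le_mul_left _ ih
        _ = k * ((n + 1) * (n.choose r)) := by ring
        _ ≤ k * (n * ((n + 1).choose r)) := Nat.mul_le_mul_left _ hstep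
        _ = n * (k * ((n + 1).choose r)) := by ring
    exact Nat.le_of_mul_le_mul_left hmain (by omega)

lemma induce_deg (H : HGraph r) (S : Finset ℕ) (v : ℕ) :
    (H.induce S).deg v = (H.edges.filter (fun e => e ⊆ S ∧ v ∈ e)).card := by
  rw [HGraph.deg_eq, HGraph.induce_edges, Finset.filter_filter]

lemma le_minDeg_real {H : HGraph r} (hne : H.verts.Nonempty) {x : ℝ}
    (h : ∀ v ∈ H.verts, x ≤ (H.deg v : ℝ)) : x ≤ (H.minDeg : ℝ) := by
  rw [HGraph.minDeg, dif_pos hne]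
  obtain ⟨v₀, hv₀, heq⟩ := Finset.exists_mem_eq_inf' hne H.deg
  rw [heq]
  exact h v₀ hv₀

lemma maxDeg_le_real {H : HGraph r} {x : ℝ} (hx : 0 ≤ x)
    (h : ∀ v ∈ H.verts, (H.deg v : ℝ) ≤ x) : (H.maxDeg : ℝ) ≤ x := by
  rcases H.verts.eq_empty_or_nonempty with he | hne
  · rw [HGraph.maxDeg, he]; simpa using hx
  · obtain ⟨v₀, hv₀, heq⟩ := Finset.exists_mem_eq_sup' hne H.deg
    rw [HGraph.maxDeg, ← Finset.sup'_eq_sup hne, heq]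
    exact h v₀ hv₀

lemma choose_cast_id1 {n : ℕ} (hr : 1 ≤ r) (hn : 1 ≤ n) :
    (n : ℝ) * (((n - 1).choose (r - 1) : ℕ) : ℝ) = ((n.choose r : ℕ) : ℝ) * (r : ℝ) := by
  exact_mod_cast congrArg (Nat.cast (R := ℝ)) (choose_id1 hr hn)

lemma dN_ge {F : HGraph r} {n : ℕ} (hr : 1 ≤ r) (hrn : 1 ≤ n) {y : ℝ}
    (hy : y * ((n.choose r : ℕ) : ℝ) ≤ (exN r n F : ℝ)) :
    y * (((n - 1).choose (r - 1) : ℕ) : ℝ) ≤ dN r n F := by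
  have hn0 : (0 : ℝ) < n := by exact_mod_cast hrn
  have hid := choose_cast_id1 (r := r) (n := n) hr hrn
  rw [dN, le_div_iff₀ hn0]
  have h3 : y * ((n : ℝ) * (((n - 1).choose (r - 1) : ℕ) : ℝ))
      = y * (((n.choose r : ℕ) : ℝ) * r) := by rw [hid]
  have h4 : (r : ℝ) * (y * ((n.choose r : ℕ) : ℝ)) ≤ (r : ℝ) * (exN r n F : ℝ) :=
    mul_le_mul_of_nonneg_left hy (by positivity)
  nlinarith [h3, h4]

lemma dN_le {F : HGraph r} {n : ℕ} (hr : 1 ≤ r) (hrn : 1 ≤ n) {y : ℝ}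
    (hy : (exN r n F : ℝ) ≤ y * ((n.choose r : ℕ) : ℝ)) :
    dN r n F ≤ y * (((n - 1).choose (r - 1) : ℕ) : ℝ) := by
  have hn0 : (0 : ℝ) < n := by exact_mod_cast hrn
  have hid := choose_cast_id1 (r := r) (n := n) hr hrn
  rw [dN, div_le_iff₀ hn0]
  have h3 : y * ((n : ℝ) * (((n - 1).choose (r - 1) : ℕ) : ℝ))
      = y * (((n.choose r : ℕ) : ℝ) * r) := by rw [hid]
  have h4 : (r : ℝ) * (exN r n F : ℝ) ≤ (r : ℝ) * (y * ((n.choose r : ℕ) : ℝ)) :=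
    mul_le_mul_of_nonneg_left hy (by positivity)
  nlinarith [h3, h4]

lemma edges_ge_of_avg {F H : HGraph r} {n : ℕ} {c : ℝ} (hr : 1 ≤ r) (h1 : 1 ≤ n)
    (hn : H.verts.card = n)
    (havg : dN r n F - c * (((n - 1).choose (r - 1) : ℕ) : ℝ) ≤ H.avgDeg) :
    (exN r n F : ℝ) - c * ((n.choose r : ℕ) : ℝ) ≤ (H.edges.card : ℝ) := by
  have hn0 : (0 : ℝ) < n := by exact_mod_cast h1
  have hr0 : (0 : ℝ) < r := by exact_mod_cast hr
  have hid := choose_cast_id1 (r := r) (n := n) hr h1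
  rw [dN, HGraph.avgDeg, hn] at havg
  have h3 := mul_le_mul_of_nonneg_right havg (le_of_lt hn0)
  rw [sub_mul, div_mul_cancel₀ _ (ne_of_gt hn0), div_mul_cancel₀ _ (ne_of_gt hn0)] at h3
  have h5 : c * ((n : ℝ) * (((n - 1).choose (r - 1) : ℕ) : ℝ))
      = c * (((n.choose r : ℕ) : ℝ) * r) := by rw [hid]
  have h4 : (r : ℝ) * ((exN r n F : ℝ) - c * ((n.choose r : ℕ) : ℝ))
      ≤ (r : ℝ) * (H.edges.card : ℝ) := by linarith [h3, h5]
  exact le_of_mul_le_mul_left h4 hr0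



lemma ex_bounds_of_close {r : ℕ} {F : HGraph r} {π η : ℝ} {k : ℕ} (hk : r ≤ k)
    (h : |(exN r k F : ℝ) / (k.choose r : ℝ) - π| < η) :
    (π - η) * ((k.choose r : ℕ) : ℝ) ≤ (exN r k F : ℝ) ∧
      (exN r k F : ℝ) ≤ (π + η) * ((k.choose r : ℕ) : ℝ) := by
  have hC : (0:ℝ) < ((k.choose r : ℕ) : ℝ) := by exact_mod_cast Nat.choose_pos hk
  obtain ⟨h1, h2⟩ := abs_lt.mp h
  constructor
  · have h3 : π - η < (exN r k F : ℝ) / ((k.choose r : ℕ) : ℝ) := by linarith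
    calc (π - η) * ((k.choose r : ℕ) : ℝ)
        ≤ ((exN r k F : ℝ) / ((k.choose r : ℕ) : ℝ)) * ((k.choose r : ℕ) : ℝ) :=
          mul_le_mul_of_nonneg_right (le_of_lt h3) (le_of_lt hC)
      _ = (exN r k F : ℝ) := div_mul_cancel₀ _ (ne_of_gt hC)
  · have h3 : (exN r k F : ℝ) / ((k.choose r : ℕ) : ℝ) < π + η := by linarith
    calc (exN r k F : ℝ)
        = ((exN r k F : ℝ) / ((k.choose r : ℕ) : ℝ)) * ((k.choose r : ℕ) : ℝ) :=
          (div_mul_cancel₀ _ (ne_of_gt hC)).symm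
      _ ≤ (π + η) * ((k.choose r : ℕ) : ℝ) :=
          mul_le_mul_of_nonneg_right (le_of_lt h3) (le_of_lt hC)

set_option maxHeartbeats 2000000 in
lemma per_vertex {r : ℕ} {F : HGraph r} {P : Pattern r} {π ζw ζe ε ζ α δ₁ η c : ℝ}
    (hrpos : 1 ≤ r)
    {i₀ : ℕ} (hi₀ : i₀ ∈ P.idx)
    (hπ0 : 0 ≤ π)
    (hε0 : 0 < ε) (hζ0 : 0 < ζ) (hζζw : ζ ≤ ζw) (hζε : ζ ≤ ε)
    (hα0 : 0 < α) (hαr : 4 * (r:ℝ) * α ≤ ζ/16)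
    (hδ₁def : δ₁ = ζ * α / 8)
    (hη0 : 0 < η) (hηδ₁ : η ≤ δ₁) (hηε4 : η ≤ ε/4) (hηc : η + c ≤ ζe)
    {Nw Ne N₁ : ℕ}
    (hWVE : ∀ H : HGraph r, Nw ≤ H.verts.card → ¬ F.IsCopyIn H →
      (π - ζw) * (((H.verts.card - 1).choose (r-1) : ℕ) : ℝ) ≤ (H.minDeg : ℝ) →
      ∀ v ∈ H.verts, P.IsSubconstruction (H.deleteVert v) →
        (H.deg v : ℝ) ≤ (π + ε/2) * (((H.verts.card - 1).choose (r-1) : ℕ) : ℝ))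
    (hES : ∀ H : HGraph r, Ne ≤ H.verts.card → ¬ F.IsCopyIn H →
      (π - ζe) * ((H.verts.card.choose r : ℕ) : ℝ) ≤ (H.edges.card : ℝ) →
      ∃ H' : HGraph r, H'.verts ⊆ H.verts ∧ H'.edges ⊆ H.edges ∧
        (π - δ₁) * ((H.verts.card.choose r : ℕ) : ℝ) ≤ (H'.edges.card : ℝ) ∧
        P.IsSubconstruction H')
    (hN₁ : ∀ k, N₁ ≤ k → |(exN r k F : ℝ) / (k.choose r : ℝ) - π| < η)
    {n T : ℕ}
    (hnNe : Ne ≤ n) (hTge : α * (n:ℝ) ≤ (T:ℝ)) (hTle : (T:ℝ) ≤ 2*α*(n:ℝ))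
    (hTn : 2 * T ≤ n) (hnTlb : N₁ + Nw + r + 2 ≤ n - T)
    {H : HGraph r} (hHn : H.verts.card = n) (hfree : ¬ F.IsCopyIn H)
    (hElb : (exN r n F : ℝ) - c * ((n.choose r : ℕ) : ℝ) ≤ (H.edges.card : ℝ))
    {u : ℕ} (hu : u ∈ H.verts) :
    (H.deg u : ℝ) ≤ dN r n F + ε * (((n-1).choose (r-1) : ℕ) : ℝ) := by
  classical
  have hn1 : 1 ≤ n := by omega
  have hrn : r ≤ n := by omega
  have hCnr0 : (0:ℝ) < ((n.choose r : ℕ) : ℝ) := by exact_mod_cast Nat.choose_pos hrn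
  have hC'0 : (0:ℝ) ≤ (((n-1).choose (r-1) : ℕ) : ℝ) := by positivity
  obtain ⟨hexlo, hexhi⟩ := ex_bounds_of_close hrn (hN₁ n (by omega))
  obtain ⟨hexlo', hexhi'⟩ :=
    ex_bounds_of_close (by omega : r ≤ n - T) (hN₁ (n - T) (by omega))
  have hdNlo : (π - η) * (((n-1).choose (r-1) : ℕ) : ℝ) ≤ dN r n F := dN_ge hrpos hn1 hexlo
  by_cases hsmall : (H.deg u : ℝ) ≤ (π - ζ/2) * (((n-1).choose (r-1) : ℕ) : ℝ)
  · have h9 : (π - ζ/2) * (((n-1).choose (r-1) : ℕ) : ℝ)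
        ≤ ((π - η) + ε) * (((n-1).choose (r-1) : ℕ) : ℝ) :=
      mul_le_mul_of_nonneg_right (by linarith) hC'0
    rw [add_mul] at h9
    linarith
  push_neg at hsmall
  -- apply edge stability
  have hES_pre : (π - ζe) * ((H.verts.card.choose r : ℕ) : ℝ) ≤ (H.edges.card : ℝ) := by
    rw [hHn]
    have h9 : (π - ζe) * ((n.choose r : ℕ) : ℝ) ≤ (π - η - c) * ((n.choose r : ℕ) : ℝ) :=
      mul_le_mul_of_nonneg_right (by linarith) (le_of_lt hCnr0)
    linarith
  obtain ⟨H', hv', he', hcard', hsubcon'⟩ := hES H (by rw [hHn]; exact hnNe) hfree hES_pre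
  rw [hHn] at hcard'
  -- the working graph H2 : all of H' plus the star at u
  set H2 := HGraph.ofEdges r H.verts (H'.edges ∪ H.edges.filter (fun e => u ∈ e)) with hH2
  have hwf : ∀ e ∈ H'.edges ∪ H.edges.filter (fun e => u ∈ e),
      e ⊆ H.verts ∧ e.card = r := by
    intro e he
    rcases Finset.mem_union.mp he with h | h
    · exact ⟨H.edges_sub e (he' h), H.edges_card e (he' h)⟩
    · have h1 := (Finset.mem_filter.mp h).1
      exact ⟨H.edges_sub e h1, H.edges_card e h1⟩
  have hE2 : H2.edges = H'.edges ∪ H.edges.filter (fun e => u ∈ e) :=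
    HGraph.ofEdges_edges_of_wf hwf
  have hV2 : H2.verts = H.verts := rfl
  have hE2H : H2.edges ⊆ H.edges := by
    rw [hE2]
    intro e he
    rcases Finset.mem_union.mp he with h | h
    · exact he' h
    · exact (Finset.mem_filter.mp h).1
  have hfree2 : ¬ F.IsCopyIn H2 := HGraph.not_copy_of_sub hfree (by rw [hV2]) hE2H
  have hn2 : H2.verts.card = n := by rw [hV2, hHn]
  have hu2 : u ∈ H2.verts := by rw [hV2]; exact hu
  -- hypotheses of the cleaning process
  have hbase : (π - δ₁) * ((n.choose r : ℕ) : ℝ) ≤ (H2.edges.card : ℝ) := by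
    have h1 : H'.edges.card ≤ H2.edges.card :=
      Finset.card_le_card (by rw [hE2]; exact Finset.subset_union_left)
    have h2 : (H'.edges.card : ℝ) ≤ (H2.edges.card : ℝ) := by exact_mod_cast h1
    linarith
  have hupper : (exN r (n - T) F : ℝ) ≤ (π + δ₁) * (((n - T).choose r : ℕ) : ℝ) := by
    have hCk0 : (0:ℝ) ≤ (((n-T).choose r : ℕ) : ℝ) := by positivity
    have h9 : (π + η) * (((n-T).choose r : ℕ) : ℝ)
        ≤ (π + δ₁) * (((n-T).choose r : ℕ) : ℝ) :=
      mul_le_mul_of_nonneg_right (by linarith) hCk0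
    linarith
  have hnum : (ζ + δ₁) * (((n - T).choose r : ℕ) : ℝ)
      < (ζ - δ₁) * ((n.choose r : ℕ) : ℝ) := by
    have hn0 : (0:ℝ) < (n:ℝ) := by exact_mod_cast hn1
    have hnT_cast : ((n - T : ℕ) : ℝ) = (n : ℝ) - (T : ℝ) := Nat.cast_sub (by omega)
    have hdec : (n : ℝ) * (((n - T).choose r : ℕ) : ℝ)
        ≤ ((n - T : ℕ) : ℝ) * ((n.choose r : ℕ) : ℝ) := by
      exact_mod_cast choose_decay hrpos (by omega : 1 ≤ n - T) (by omega : n - T ≤ n)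
    have hCk : (((n-T).choose r : ℕ) : ℝ) ≤ (1 - α) * ((n.choose r : ℕ) : ℝ) := by
      have h1 : ((n - T : ℕ) : ℝ) ≤ (1 - α) * (n : ℝ) := by
        rw [hnT_cast]; linarith
      have h2 : (n:ℝ) * (((n-T).choose r : ℕ):ℝ)
          ≤ (n:ℝ) * ((1-α) * ((n.choose r : ℕ):ℝ)) := by
        calc (n:ℝ) * (((n-T).choose r : ℕ):ℝ)
            ≤ ((n-T:ℕ):ℝ) * ((n.choose r : ℕ):ℝ) := hdec
          _ ≤ ((1-α) * (n:ℝ)) * ((n.choose r : ℕ):ℝ) :=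
              mul_le_mul_of_nonneg_right h1 (le_of_lt hCnr0)
          _ = (n:ℝ) * ((1-α) * ((n.choose r : ℕ):ℝ)) := by ring
      exact le_of_mul_le_mul_left h2 hn0
    have hδ₁0 : 0 < δ₁ := by rw [hδ₁def]; positivity
    have hζδ : 0 ≤ ζ + δ₁ := by positivity
    have h3 : (ζ+δ₁) * (((n-T).choose r : ℕ):ℝ)
        ≤ (ζ+δ₁) * ((1-α) * ((n.choose r : ℕ):ℝ)) := mul_le_mul_of_nonneg_left hCk hζδ
    have hα1 : α ≤ 1 := by
      have hr1 : (1:ℝ) ≤ (r:ℝ) := by exact_mod_cast hrpos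
      nlinarith [hζε, hε0, hζ0]
    have hscal : (ζ+δ₁) * (1-α) < ζ - δ₁ := by
      rw [hδ₁def]
      nlinarith [mul_pos hζ0 hα0, mul_pos (mul_pos hζ0 hα0) hα0]
    have h4 : ((ζ+δ₁) * (1-α)) * ((n.choose r : ℕ):ℝ)
        < (ζ - δ₁) * ((n.choose r : ℕ):ℝ) := mul_lt_mul_of_pos_right hscal hCnr0
    calc (ζ + δ₁) * (((n - T).choose r : ℕ) : ℝ)
        ≤ (ζ+δ₁) * ((1-α) * ((n.choose r : ℕ):ℝ)) := h3
      _ = ((ζ+δ₁) * (1-α)) * ((n.choose r : ℕ):ℝ) := by ring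
      _ < (ζ - δ₁) * ((n.choose r : ℕ):ℝ) := h4
  obtain ⟨W, hWV2, huW, hWgt, hWdeg⟩ :=
    cleaning hrpos hfree2 hu2 hn2 (by omega) hbase hupper hnum
  have hWV : W ⊆ H.verts := hWV2
  have hk₀n : W.card ≤ n := by rw [← hHn]; exact Finset.card_le_card hWV
  set Hs := H2.induce W with hHs
  have hsv : Hs.verts = W := induce_card hWV2
  have hsn : Hs.verts.card = W.card := by rw [hsv]
  have hfreeS : ¬ F.IsCopyIn Hs := by
    apply HGraph.not_copy_of_sub hfree2
    · rw [hsv]; exact hWV2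
    · rw [hHs, HGraph.induce_edges]; exact Finset.filter_subset _ _
  -- splitting the degree of u
  have hdeg_split : H.deg u ≤ Hs.deg u
      + (H.edges.filter (fun e => u ∈ e ∧ ¬ e ⊆ W)).card := by
    rw [HGraph.deg_eq, hHs, induce_deg]
    have hsub : H.edges.filter (fun e => u ∈ e)
        ⊆ (H2.edges.filter (fun e => e ⊆ W ∧ u ∈ e))
          ∪ (H.edges.filter (fun e => u ∈ e ∧ ¬ e ⊆ W)) := by
      intro e he
      obtain ⟨h1, h2⟩ := Finset.mem_filter.mp he
      by_cases hw : e ⊆ W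
      · apply Finset.mem_union_left
        refine Finset.mem_filter.mpr ⟨?_, hw, h2⟩
        rw [hE2]; exact Finset.mem_union_right _ (Finset.mem_filter.mpr ⟨h1, h2⟩)
      · exact Finset.mem_union_right _ (Finset.mem_filter.mpr ⟨h1, h2, hw⟩)
    calc (H.edges.filter (fun e => u ∈ e)).card ≤ _ := Finset.card_le_card hsub
      _ ≤ _ := Finset.card_union_le _ _
  -- bounding the loss
  have hloss_nat := card_loss_le H hu huW
  have hsd : (H.verts \ W).card = n - W.card := by rw [Finset.card_sdiff_of_subset hWV, hHn]
  have hlossR : ((H.edges.filter (fun e => u ∈ e ∧ ¬ e ⊆ W)).card : ℝ)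
      ≤ (ζ/16) * (((n-1).choose (r-1) : ℕ) : ℝ) := by
    rcases eq_or_lt_of_le hrpos with hr1 | hr2
    · -- r = 1 : no loss at all
      have hempty : H.edges.filter (fun e => u ∈ e ∧ ¬ e ⊆ W) = ∅ := by
        rw [Finset.filter_eq_empty_iff]
        rintro e he ⟨h1, h2⟩
        apply h2
        have hcard1 : e.card = 1 := by rw [H.edges_card e he, ← hr1]
        obtain ⟨a, ha⟩ := Finset.card_eq_one.mp hcard1
        rw [ha] at h1
        have hau : a = u := (Finset.mem_singleton.mp h1).symm
        rw [ha, hau]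
        intro x hx
        rw [Finset.mem_singleton.mp hx]
        exact huW
      rw [hempty]
      simp only [Finset.card_empty, Nat.cast_zero]
      positivity
    · -- r ≥ 2
      have hn2' : 2 ≤ n := by omega
      have hid3 := choose_id3 (n := n) (by omega : 2 ≤ r) hn2'
      have hnid : n * ((n-2).choose (r-2)) ≤ 2 * ((r-1) * ((n-1).choose (r-1))) := by
        calc n * ((n-2).choose (r-2)) ≤ (2 * (n-1)) * ((n-2).choose (r-2)) :=
              Nat.mul_le_mul_right _ (by omega)
          _ = 2 * ((n-1) * ((n-2).choose (r-2))) := by ring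
          _ = 2 * ((n-1).choose (r-1) * (r-1)) := by rw [hid3]
          _ = 2 * ((r-1) * ((n-1).choose (r-1))) := by ring
      have hnkT : ((n - W.card : ℕ) : ℝ) ≤ (T : ℝ) := by
        exact_mod_cast Nat.cast_le.mpr (by omega : n - W.card ≤ T)
      have hCn2 : (0:ℝ) ≤ (((n-2).choose (r-2) : ℕ) : ℝ) := by positivity
      have hr1R : ((r:ℝ) - 1) = ((r - 1 : ℕ) : ℝ) := by
        have : (1:ℕ) ≤ r := hrpos
        push_cast [Nat.cast_sub this]
        ring
      have hstep1 : ((H.edges.filter (fun e => u ∈ e ∧ ¬ e ⊆ W)).card : ℝ)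
          ≤ ((n - W.card : ℕ) : ℝ) * (((n-2).choose (r-2) : ℕ) : ℝ) := by
        have := hloss_nat
        rw [hsd, hHn] at this
        exact_mod_cast this
      have hstep2 : ((n - W.card : ℕ) : ℝ) * (((n-2).choose (r-2) : ℕ) : ℝ)
          ≤ (2*α*(n:ℝ)) * (((n-2).choose (r-2) : ℕ) : ℝ) :=
        mul_le_mul_of_nonneg_right (le_trans hnkT hTle) hCn2
      have hstep3 : (2*α*(n:ℝ)) * (((n-2).choose (r-2) : ℕ) : ℝ)
          ≤ (2*α) * (2 * (((r-1:ℕ) * ((n-1).choose (r-1)) : ℕ) : ℝ)) := by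
        have hcast : ((n:ℝ)) * (((n-2).choose (r-2) : ℕ) : ℝ)
            ≤ 2 * (((r-1:ℕ) * ((n-1).choose (r-1)) : ℕ) : ℝ) := by
          exact_mod_cast hnid
        calc (2*α*(n:ℝ)) * (((n-2).choose (r-2) : ℕ) : ℝ)
            = (2*α) * ((n:ℝ) * (((n-2).choose (r-2) : ℕ) : ℝ)) := by ring
          _ ≤ (2*α) * (2 * (((r-1:ℕ) * ((n-1).choose (r-1)) : ℕ) : ℝ)) := by
              apply mul_le_mul_of_nonneg_left hcast (by positivity)
      have hstep4 : (2*α) * (2 * (((r-1:ℕ) * ((n-1).choose (r-1)) : ℕ) : ℝ))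
          ≤ (ζ/16) * (((n-1).choose (r-1) : ℕ) : ℝ) := by
        have hexp : (2*α) * (2 * (((r-1:ℕ) * ((n-1).choose (r-1)) : ℕ) : ℝ))
            = (4 * ((r-1:ℕ):ℝ) * α) * (((n-1).choose (r-1) : ℕ) : ℝ) := by
          push_cast
          ring
        rw [hexp]
        apply mul_le_mul_of_nonneg_right ?_ hC'0
        have hr1' : ((r-1:ℕ):ℝ) ≤ (r:ℝ) := by
          exact_mod_cast Nat.cast_le.mpr (by omega : r - 1 ≤ r)
        have : 4 * ((r-1:ℕ):ℝ) * α ≤ 4 * (r:ℝ) * α := by nlinarith [hα0]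
        linarith
      linarith
  -- lower bound on the degree of u in Hs
  have hWne : W.Nonempty := ⟨u, huW⟩
  have hk₀1 : 1 ≤ W.card := Finset.card_pos.mpr hWne
  have hCk'0 : (0:ℝ) ≤ (((W.card-1).choose (r-1) : ℕ) : ℝ) := by positivity
  have hCk'C' : (((W.card-1).choose (r-1) : ℕ) : ℝ) ≤ (((n-1).choose (r-1) : ℕ) : ℝ) := by
    exact_mod_cast Nat.cast_le.mpr (Nat.choose_le_choose _ (by omega))
  have hcastsplit : (H.deg u : ℝ) ≤ (Hs.deg u : ℝ)
      + ((H.edges.filter (fun e => u ∈ e ∧ ¬ e ⊆ W)).card : ℝ) := by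
    exact_mod_cast Nat.cast_le.mpr hdeg_split
  have hdegu_lb : (π - ζ) * (((W.card-1).choose (r-1) : ℕ) : ℝ) ≤ (Hs.deg u : ℝ) := by
    rcases le_or_gt (π - ζ) 0 with hneg | hpos
    · calc (π - ζ) * (((W.card-1).choose (r-1) : ℕ) : ℝ) ≤ 0 :=
            mul_nonpos_of_nonpos_of_nonneg hneg hCk'0
        _ ≤ (Hs.deg u : ℝ) := by positivity
    · have h1 : (π - ζ) * (((W.card-1).choose (r-1) : ℕ) : ℝ)
          ≤ (π - ζ) * (((n-1).choose (r-1) : ℕ) : ℝ) :=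
        mul_le_mul_of_nonneg_left hCk'C' (le_of_lt hpos)
      have h2 : (π - ζ) * (((n-1).choose (r-1) : ℕ) : ℝ)
          ≤ (π - ζ/2 - ζ/16) * (((n-1).choose (r-1) : ℕ) : ℝ) :=
        mul_le_mul_of_nonneg_right (by linarith) hC'0
      have h3 : (π - ζ/2) * (((n-1).choose (r-1) : ℕ) : ℝ)
          = (π - ζ/2 - ζ/16) * (((n-1).choose (r-1) : ℕ) : ℝ)
            + (ζ/16) * (((n-1).choose (r-1) : ℕ) : ℝ) := by ring
      linarith
  have hmindeg : (π - ζw) * (((Hs.verts.card - 1).choose (r-1) : ℕ) : ℝ)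
      ≤ (Hs.minDeg : ℝ) := by
    apply le_minDeg_real (by rw [hsv]; exact hWne)
    intro v hv
    rw [hsv] at hv
    rw [hsn]
    have hζwb : (π - ζw) * (((W.card-1).choose (r-1) : ℕ) : ℝ)
        ≤ (π - ζ) * (((W.card-1).choose (r-1) : ℕ) : ℝ) :=
      mul_le_mul_of_nonneg_right (by linarith) hCk'0
    by_cases hvu : v = u
    · subst hvu
      linarith
    · have := hWdeg v hv hvu
      rw [hHs]
      linarith
  -- Hs minus u is a subconstruction
  have hdel : P.IsSubconstruction (Hs.deleteVert u) := by
    apply subcon_mono hsubcon' hi₀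
    intro e he
    rw [HGraph.deleteVert_edges] at he
    obtain ⟨h1, h2⟩ := Finset.mem_filter.mp he
    rw [hHs, HGraph.induce_edges] at h1
    obtain ⟨h3, h4⟩ := Finset.mem_filter.mp h1
    rw [hE2] at h3
    rcases Finset.mem_union.mp h3 with h | h
    · exact h
    · exact absurd (Finset.mem_filter.mp h).2 h2
  -- weak vertex extendability
  have hNwk : Nw ≤ Hs.verts.card := by rw [hsn]; omega
  have hWVEout := hWVE Hs hNwk hfreeS hmindeg u (by rw [hsv]; exact huW) hdel
  rw [hsn] at hWVEout
  -- final combination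
  have hπε2 : 0 ≤ π + ε/2 := by linarith
  have hmono2 : (π + ε/2) * (((W.card-1).choose (r-1) : ℕ):ℝ)
      ≤ (π + ε/2) * (((n-1).choose (r-1) : ℕ) : ℝ) := mul_le_mul_of_nonneg_left hCk'C' hπε2
  have h10 : (ζ/16) * (((n-1).choose (r-1) : ℕ) : ℝ)
      ≤ (ε/16) * (((n-1).choose (r-1) : ℕ) : ℝ) :=
    mul_le_mul_of_nonneg_right (by linarith) hC'0
  have h11 : (π + ε/2 + ε/16) * (((n-1).choose (r-1) : ℕ) : ℝ)
      ≤ ((π - η) + ε) * (((n-1).choose (r-1) : ℕ) : ℝ) :=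
    mul_le_mul_of_nonneg_right (by linarith) hC'0
  have h12 : (π + ε/2 + ε/16) * (((n-1).choose (r-1) : ℕ) : ℝ)
      = (π + ε/2) * (((n-1).choose (r-1) : ℕ) : ℝ)
        + (ε/16) * (((n-1).choose (r-1) : ℕ) : ℝ) := by ring
  have h13 : ((π - η) + ε) * (((n-1).choose (r-1) : ℕ) : ℝ)
      = (π - η) * (((n-1).choose (r-1) : ℕ) : ℝ)
        + ε * (((n-1).choose (r-1) : ℕ) : ℝ) := by ring
  linarith

set_option maxHeartbeats 2000000 in
theorem statement_3_aux (r m : ℕ) (F : HGraph r) (hFm : F.verts.card = m)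
    (P : Pattern r) (hmin : P.Minimal) (hTP : IsTuranPair r F P)
    (π : ℝ) (hπ : HasTuranDensity r F π)
    (hes : EdgeStable r F P π) (hwve : WeaklyVertexExtendable r F P π) :
    ∃ c : ℝ, 0 < c ∧ ∀ᶠ n : ℕ in atTop,
      BoundedAt r n F (c * (((n-1).choose (r-1) : ℕ) : ℝ))
        ((1 - π) / (8 * m) * (((n-1).choose (r-1) : ℕ) : ℝ)) := by
  classical
  rcases Nat.eq_zero_or_pos r with hr0 | hrpos
  · -- r = 0 : all degrees vanish
    subst hr0
    refine ⟨1, one_pos, Eventually.of_forall (fun n => ?_)⟩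
    intro H hn hfree havg
    have hmax : (H.maxDeg : ℝ) ≤ 0 := by
      apply maxDeg_le_real le_rfl
      intro v hv
      have hdeg0 : H.deg v = 0 := by
        rw [HGraph.deg_eq, Finset.card_eq_zero]
        apply Finset.filter_false_of_mem
        intro e he hv'
        have h0 : e = ∅ := Finset.card_eq_zero.mp (H.edges_card e he)
        rw [h0] at hv'
        simp at hv'
      rw [hdeg0]; norm_num
    have hdN : dN 0 n F = 0 := by rw [dN]; simp
    have hf2 : 0 ≤ (1 - π) / (8 * (m : ℝ)) * (((n-1).choose (0-1) : ℕ) : ℝ) := by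
      have hπ1 : π ≤ 1 := pi_le_one hπ
      have : (0:ℝ) ≤ (1 - π) / (8 * (m : ℝ)) := div_nonneg (by linarith) (by positivity)
      positivity
    rw [hdN]
    linarith
  rcases Finset.eq_empty_or_nonempty F.edges with hFe | hFne
  · -- F has no edges: all large graphs contain F
    refine ⟨1, one_pos, eventually_atTop.mpr ⟨m, fun n hn => ?_⟩⟩
    intro H hHn hfree _
    exfalso
    apply hfree
    obtain ⟨f, hinj, hmem⟩ := exists_injOn F.verts H.verts (by rw [hFm, hHn]; exact hn)
    exact ⟨f, hinj, hmem, by simp [hFe]⟩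
  -- main case
  have hm_r : r ≤ m := by
    obtain ⟨e₀, he₀⟩ := hFne
    have h1 := F.edges_card e₀ he₀
    have h2 := Finset.card_le_card (F.edges_sub e₀ he₀)
    omega
  have hm1 : 1 ≤ m := le_trans hrpos hm_r
  have hπ0 : 0 ≤ π := pi_nonneg hπ
  have hπ1 : π < 1 := pi_lt_one hπ hFne
  obtain ⟨i₀, hi₀⟩ := idx_nonempty hTP hFne
  set ε := (1 - π) / (8 * (m : ℝ)) with hε
  have hε0 : 0 < ε := div_pos (by linarith) (by positivity)
  have hε8 : ε ≤ 1 / 8 := by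
    rw [hε]
    apply div_le_div₀ (by norm_num) (by linarith) (by norm_num)
    have : (1:ℝ) ≤ (m:ℝ) := by exact_mod_cast hm1
    linarith
  obtain ⟨Nw, ζw, hζw, hWVE⟩ := hwve (ε / 2) (by positivity)
  set ζ := min ζw ε with hζ
  have hζ0 : 0 < ζ := lt_min hζw hε0
  have hζζw : ζ ≤ ζw := min_le_left _ _
  have hζε : ζ ≤ ε := min_le_right _ _
  set α := ζ / (64 * ((r : ℝ) + 1)) with hα
  have hα0 : 0 < α := by
    apply div_pos hζ0
    positivity
  have hζ1 : ζ ≤ 1 := by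
    have := hε8; linarith [hζε]
  have hα14 : α ≤ 1 / 64 := by
    rw [hα, div_le_div_iff₀ (by positivity) (by norm_num)]
    have h3 : (0:ℝ) ≤ (r:ℝ) := by positivity
    nlinarith
  set δ₁ := ζ * α / 8 with hδ₁
  have hδ₁0 : 0 < δ₁ := by rw [hδ₁]; positivity
  obtain ⟨Ne, ζe, hζe, hES⟩ := hes δ₁ hδ₁0
  set c := ζe / 2 with hc
  have hc0 : 0 < c := by rw [hc]; positivity
  set η := min δ₁ (min (ε / 4) (ζe / 2)) with hη
  have hη0 : 0 < η := lt_min hδ₁0 (lt_min (by positivity) (by positivity))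
  have hηδ₁ : η ≤ δ₁ := min_le_left _ _
  have hηε4 : η ≤ ε / 4 := le_trans (min_le_right _ _) (min_le_left _ _)
  have hηζe : η ≤ ζe / 2 := le_trans (min_le_right _ _) (min_le_right _ _)
  obtain ⟨N₁, hN₁⟩ := eventually_atTop.mp (eventually_ratio_close hπ hη0)
  refine ⟨c, hc0, eventually_atTop.mpr
    ⟨max (max Ne (2 * (N₁ + Nw + r + m + 2))) (⌈(2:ℝ) / α⌉₊ + 1), fun n hn => ?_⟩⟩
  have hnNe : Ne ≤ n := le_trans (le_max_left _ _) (le_trans (le_max_left _ _) hn)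
  have hnBig : 2 * (N₁ + Nw + r + m + 2) ≤ n :=
    le_trans (le_max_right _ _) (le_trans (le_max_left _ _) hn)
  have hnα : (2:ℝ) / α ≤ (n : ℝ) := by
    have h1 : (⌈(2:ℝ) / α⌉₊ : ℝ) ≤ n := by
      exact_mod_cast le_trans (by omega : ⌈(2:ℝ)/α⌉₊ ≤ ⌈(2:ℝ)/α⌉₊ + 1)
        (le_trans (le_max_right _ _) hn)
    exact le_trans (Nat.le_ceil _) h1
  have hn1 : 1 ≤ n := by omega
  have hαn2 : 2 ≤ α * (n : ℝ) := by
    rw [div_le_iff₀ hα0] at hnα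
    linarith [hnα]
  -- T and its bounds
  set T := ⌈α * (n : ℝ)⌉₊ with hT
  have hTge : α * (n : ℝ) ≤ (T : ℝ) := Nat.le_ceil _
  have hTle : (T : ℝ) ≤ 2 * α * (n : ℝ) := by
    have h1 : (T : ℝ) < α * (n : ℝ) + 1 := Nat.ceil_lt_add_one (by positivity)
    linarith
  have hTn : 2 * T ≤ n := by
    have h1 : (2 * T : ℝ) ≤ 4 * α * (n : ℝ) := by push_cast; linarith
    have h2 : 4 * α * (n : ℝ) ≤ (n : ℝ) := by nlinarith [hα14, hα0, hαn2]
    exact_mod_cast le_trans h1 h2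
  have hnT_cast : ((n - T : ℕ) : ℝ) = (n : ℝ) - (T : ℝ) := by
    have : T ≤ n := by omega
    exact Nat.cast_sub this
  have hnTlb : N₁ + Nw + r + m + 2 ≤ n - T := by omega
  have hrn : r ≤ n := by omega
  have hCnr0 : (0:ℝ) < ((n.choose r : ℕ) : ℝ) := by exact_mod_cast Nat.choose_pos hrn
  have hC'0 : (0:ℝ) ≤ (((n-1).choose (r-1) : ℕ) : ℝ) := by positivity
  -- bounds on exN at n and n - T
  obtain ⟨hexlo, hexhi⟩ := ex_bounds_of_close hrn (hN₁ n (by omega))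
  obtain ⟨hexlo', hexhi'⟩ := ex_bounds_of_close (by omega : r ≤ n - T) (hN₁ (n - T) (by omega))
  have hdNlo : (π - η) * (((n-1).choose (r-1) : ℕ) : ℝ) ≤ dN r n F := dN_ge hrpos hn1 hexlo
  -- the bounded statement
  intro H hHn hfree havg
  have hdN0 : 0 ≤ dN r n F := by rw [dN]; positivity
  have hαr : 4 * (r:ℝ) * α ≤ ζ / 16 := by
    have hpos : (0:ℝ) < 64 * ((r:ℝ) + 1) := by positivity
    rw [hα, ← mul_div_assoc, div_le_div_iff₀ hpos (by norm_num : (0:ℝ) < 16)]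
    have hr0' : (0:ℝ) ≤ (r:ℝ) := by positivity
    nlinarith [mul_nonneg hr0' (le_of_lt hζ0)]
  have hηc : η + c ≤ ζe := by rw [hc]; linarith [hηζe]
  have hElb := edges_ge_of_avg (F := F) hrpos hn1 hHn havg
  have hkey : ∀ u ∈ H.verts,
      (H.deg u : ℝ) ≤ dN r n F + ε * (((n-1).choose (r-1) : ℕ) : ℝ) := by
    intro u hu
    exact per_vertex hrpos hi₀ hπ0 hε0 hζ0 hζζw hζε hα0 hαr hδ₁ hη0 hηδ₁ hηε4 hηc
      hWVE hES (fun k hk => hN₁ k hk) hnNe hTge hTle hTn (by omega) hHn hfree hElb hu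
  have hmax : 0 ≤ dN r n F + ε * (((n-1).choose (r-1) : ℕ) : ℝ) := by
    have := mul_nonneg (le_of_lt hε0) hC'0
    linarith
  exact maxDeg_le_real hmax hkey

end Aux

/-- edge-stability plus weak vertex-extendability implies
boundedness. -/
theorem statement_3 (r m : ℕ) (F : HGraph r) (hFm : F.verts.card = m)
    (P : Pattern r) (hmin : P.Minimal) (hTP : IsTuranPair r F P)
    (π : ℝ) (hπ : HasTuranDensity r F π)
    (hes : EdgeStable r F P π) (hwve : WeaklyVertexExtendable r F P π) :
    ∃ c : ℝ, 0 < c ∧ ∀ᶠ n : ℕ in atTop,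
      BoundedAt r n F (c * (((n-1).choose (r-1) : ℕ) : ℝ))
        ((1 - π) / (8 * m) * (((n-1).choose (r-1) : ℕ) : ℝ)) := by
  exact statement_3_aux r m F hFm P hmin hTP π hπ hes hwve

end DensityCH
end
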